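/- arXiv:2401.03301 — 7 statements merged into one kernel-verified Lean document; each statement's English description precedes it below -/
import Mathlib

section
/- Freedman's inequality (modified form): Let X_1, …, X_T be real-valued random variables with X_t ≤ R almost surely for some R > 0, E[X_t | X_1, …, X_{t−1}] = 0 for all t, and E[X_t² | X_1, …, X_{t−1}] < ∞ almost surely. Define S := Σ_{t=1}^T X_t and V := Σ_{t=1}^T E[X_t² | X_1, …, X_{t−1}]. Then for every δ ∈ (0,1) and every fixed λ ∈ (0, 1/R], with probability at least 1 − δ, S ≤ (e − 2) λ V + ln(1/δ)/λ. -/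
open MeasureTheory
open scoped ENNReal

open Real
open scoped Nat

set_option maxHeartbeats 1600000

lemma real_exp_tsum (y : ℝ) : Real.exp y = ∑' n : ℕ, y ^ n / n ! := by
  rw [Real.exp_eq_exp_ℝ, NormedSpace.exp_eq_tsum_div]

lemma exp_le_quad {y : ℝ} (hy : y ≤ 1) :
    Real.exp y ≤ 1 + y + (Real.exp 1 - 2) * y ^ 2 := by
  have he2 : (1:ℝ)/2 ≤ Real.exp 1 - 2 := by
    nlinarith [Real.quadratic_le_exp_of_nonneg (zero_le_one (α := ℝ))]
  rcases le_or_gt y 0 with h0 | h0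
  · have hq : 1 + (-y) + (-y)^2/2 ≤ Real.exp (-y) := Real.quadratic_le_exp_of_nonneg (by linarith)
    have hpos : (0:ℝ) < 1 + (-y) + (-y)^2/2 := by nlinarith
    have h1 : Real.exp y ≤ (1 + (-y) + (-y)^2/2)⁻¹ := by
      have : Real.exp y = (Real.exp (-y))⁻¹ := by rw [← Real.exp_neg, neg_neg]
      rw [this]
      exact inv_anti₀ hpos hq
    have h2 : (1 + (-y) + (-y)^2/2)⁻¹ ≤ 1 + y + y^2/2 := by
      rw [inv_le_iff_one_le_mul₀ hpos]
      nlinarith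
    nlinarith
  · have hsum := Real.summable_pow_div_factorial y
    have hsum1 := Real.summable_pow_div_factorial (1:ℝ)
    have hsum' : Summable (fun n : ℕ => y ^ (n+2) / (n+2)!) :=
      (summable_nat_add_iff 2).mpr hsum
    have hsum1' : Summable (fun n : ℕ => (1:ℝ) ^ (n+2) / (n+2)!) :=
      (summable_nat_add_iff 2).mpr hsum1
    have h2y : Real.exp y = (1 + y) + ∑' n : ℕ, y ^ (n+2) / (n+2)! := by
      rw [real_exp_tsum, ← Summable.sum_add_tsum_nat_add 2 hsum]
      norm_num [Finset.sum_range_succ]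
    have h21 : Real.exp 1 = (2 : ℝ) + ∑' n : ℕ, (1:ℝ) ^ (n+2) / (n+2)! := by
      rw [real_exp_tsum, ← Summable.sum_add_tsum_nat_add 2 hsum1]
      norm_num [Finset.sum_range_succ]
    have hterm : ∀ n : ℕ, y ^ (n+2) / (n+2)! ≤ y^2 * ((1:ℝ)^(n+2) / (n+2)!) := by
      intro n
      have h1 : y ^ (n+2) ≤ y ^ 2 := pow_le_pow_of_le_one h0.le hy (by omega)
      have h2 : (0:ℝ) < ((n+2)! : ℝ) := by positivity
      rw [one_pow]
      rw [div_le_iff₀ h2]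
      calc y ^ (n+2) ≤ y ^ 2 := h1
        _ = y ^ 2 * (1 / ((n+2)! : ℝ)) * ((n+2)! : ℝ) := by field_simp
    have hS : ∑' n : ℕ, y ^ (n+2) / (n+2)! ≤ y^2 * ∑' n : ℕ, (1:ℝ)^(n+2)/(n+2)! := by
      rw [← tsum_mul_left]
      exact Summable.tsum_le_tsum hterm hsum' (hsum1'.mul_left _)
    rw [h2y]
    nlinarith [sq_nonneg y]

lemma condexp_exp_le {Ω : Type*} {m0 : MeasurableSpace Ω} {μ : Measure Ω}
    [IsProbabilityMeasure μ]
    {F : MeasurableSpace Ω} (hF : F ≤ m0)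
    {X : Ω → ℝ} (hXm : Measurable[m0] X) {R lam : ℝ} (hR : 0 < R) (hlam0 : 0 < lam)
    (hlamR : lam ≤ 1 / R) (hbdd : ∀ᵐ ω ∂μ, X ω ≤ R)
    (hsq : Integrable (fun ω => X ω ^ 2) μ)
    (hmean : μ[X|F] =ᵐ[μ] 0) :
    μ[fun ω => Real.exp (lam * X ω) | F] ≤ᵐ[μ]
      fun ω => Real.exp ((Real.exp 1 - 2) * lam ^ 2 * (μ[fun ω' => X ω' ^ 2|F]) ω) := by
  set c : ℝ := (Real.exp 1 - 2) * lam ^ 2 with hc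
  have hlamX : ∀ᵐ ω ∂μ, lam * X ω ≤ 1 := by
    filter_upwards [hbdd] with ω h
    calc lam * X ω ≤ lam * R := by nlinarith
      _ ≤ (1/R) * R := by nlinarith
      _ = 1 := by field_simp
  have hXint : Integrable X μ := by
    refine Integrable.mono' (((integrable_const (1:ℝ)).add hsq).div_const 2)
      (hXm.aestronglyMeasurable (μ := μ)) (ae_of_all _ fun ω => ?_)
    simp only [Pi.add_apply, Pi.div_apply, Real.norm_eq_abs]
    nlinarith [sq_nonneg (|X ω| - 1), sq_abs (X ω)]
  have hexp_int : Integrable (fun ω => Real.exp (lam * X ω)) μ := by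
    refine Integrable.mono' (integrable_const (Real.exp 1))
      ((hXm.const_mul lam).exp.aestronglyMeasurable (μ := μ)) ?_
    filter_upwards [hlamX] with ω h
    rw [Real.norm_eq_abs, abs_of_pos (Real.exp_pos _)]
    exact Real.exp_le_exp.2 h
  have hXlam_int : Integrable (fun ω => lam * X ω) μ := hXint.const_mul lam
  have hsq_c : Integrable (fun ω => c * X ω ^ 2) μ := hsq.const_mul c
  have hquad_int : Integrable (fun ω => 1 + lam * X ω + c * X ω ^ 2) μ :=
    ((integrable_const (1:ℝ)).add hXlam_int).add hsq_c
  have h1 : μ[fun ω => Real.exp (lam * X ω)|F] ≤ᵐ[μ]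
      μ[fun ω => 1 + lam * X ω + c * X ω ^ 2|F] := by
    refine condExp_mono hexp_int hquad_int ?_
    filter_upwards [hlamX] with ω h
    have := exp_le_quad h
    calc Real.exp (lam * X ω) ≤ 1 + lam * X ω + (Real.exp 1 - 2) * (lam * X ω) ^ 2 := this
      _ = 1 + lam * X ω + c * X ω ^ 2 := by rw [hc]; ring
  have e1 : μ[fun ω => 1 + lam * X ω + c * X ω ^ 2|F] =ᵐ[μ]
      μ[fun ω => 1 + lam * X ω|F] + μ[fun ω => c * X ω ^ 2|F] :=
    condExp_add (f := fun ω => 1 + lam * X ω) (g := fun ω => c * X ω ^ 2)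
      ((integrable_const (1:ℝ)).add hXlam_int) hsq_c F
  have e2 : μ[fun ω => 1 + lam * X ω|F] =ᵐ[μ]
      μ[fun _ => (1:ℝ)|F] + μ[fun ω => lam * X ω|F] :=
    condExp_add (f := fun _ => (1:ℝ)) (g := fun ω => lam * X ω) (integrable_const 1) hXlam_int F
  have e3 : μ[fun _ : Ω => (1:ℝ)|F] = fun _ => (1:ℝ) := condExp_const hF (1:ℝ)
  have e4 : μ[fun ω => lam * X ω|F] =ᵐ[μ] lam • μ[X|F] := condExp_smul (μ := μ) (m := F) lam X
  have e5 : μ[fun ω => c * X ω ^ 2|F] =ᵐ[μ] c • μ[fun ω => X ω ^ 2|F] :=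
    condExp_smul (μ := μ) (m := F) c (fun ω => X ω ^ 2)
  filter_upwards [h1, e1, e2, e4, e5, hmean] with ω hω he1 he2 he4 he5 hm
  have hval : (μ[fun ω => 1 + lam * X ω + c * X ω ^ 2|F]) ω
      = 1 + c * (μ[fun ω' => X ω' ^ 2|F]) ω := by
    rw [he1]
    simp only [Pi.add_apply]
    rw [he2]
    simp only [Pi.add_apply, e3, he4, he5, Pi.smul_apply, smul_eq_mul]
    rw [hm]
    simp
  rw [hval] at hω
  exact hω.trans (by linarith [Real.add_one_le_exp (c * (μ[fun ω' => X ω' ^ 2|F]) ω)])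

/-- The σ-algebra generated by `X_1, …, X_{t-1}` (trivial for `t = 1`). -/
def pastSigma {Ω : Type*} (X : ℕ → Ω → ℝ) (t : ℕ) : MeasurableSpace Ω :=
  ⨆ i ∈ Finset.Icc 1 (t - 1), MeasurableSpace.comap (X i) inferInstance

lemma pastSigma_le {Ω : Type*} [m0 : MeasurableSpace Ω] (X : ℕ → Ω → ℝ)
    (hX : ∀ t, Measurable (X t)) (t : ℕ) : pastSigma X t ≤ m0 :=
  iSup₂_le fun i _ => (hX i).comap_le

lemma pastSigma_mono {Ω : Type*} (X : ℕ → Ω → ℝ) {s t : ℕ} (h : s ≤ t) :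
    pastSigma X s ≤ pastSigma X t := by
  refine iSup₂_le fun i hi => ?_
  refine le_iSup₂ (f := fun i (_ : i ∈ Finset.Icc 1 (t-1)) =>
    MeasurableSpace.comap (X i) inferInstance) i ?_
  simp only [Finset.mem_Icc] at hi ⊢
  omega

lemma measurable_of_mem_past {Ω : Type*} (X : ℕ → Ω → ℝ) {i t : ℕ}
    (hi : i ∈ Finset.Icc 1 (t - 1)) : Measurable[pastSigma X t] (X i) := by
  rw [measurable_iff_comap_le]
  exact le_iSup₂ (f := fun i (_ : i ∈ Finset.Icc 1 (t-1)) =>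
    MeasurableSpace.comap (X i) inferInstance) i hi

/-- The single-step factor of the exponential supermartingale. -/
noncomputable def fY {Ω : Type*} [MeasurableSpace Ω] (μ : Measure Ω) (X : ℕ → Ω → ℝ) (lam c : ℝ)
    (t : ℕ) (ω : Ω) : ℝ :=
  Real.exp (lam * X t ω - c * (μ[fun ω' => X t ω' ^ 2|pastSigma X t]) ω)


lemma fY_nonneg {Ω : Type*} [MeasurableSpace Ω] (μ : Measure Ω) (X : ℕ → Ω → ℝ)
    (lam c : ℝ) (t : ℕ) (ω : Ω) : 0 ≤ fY μ X lam c t ω := by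
  unfold fY; positivity

section Key

set_option linter.unusedSectionVars false

variable {Ω : Type*} [m0 : MeasurableSpace Ω] (μ : Measure Ω) [IsProbabilityMeasure μ]
    (T : ℕ) (X : ℕ → Ω → ℝ) (hX : ∀ t, Measurable (X t))
    (R : ℝ) (hR : 0 < R)
    (hbdd : ∀ t ∈ Finset.Icc 1 T, ∀ᵐ ω ∂μ, X t ω ≤ R)
    (hsq : ∀ t ∈ Finset.Icc 1 T, Integrable (fun ω => (X t ω) ^ 2) μ)
    (hmean : ∀ t ∈ Finset.Icc 1 T, μ[X t | pastSigma X t] =ᵐ[μ] 0)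
    (lam : ℝ) (hlam0 : 0 < lam) (hlamR : lam ≤ 1 / R)

local notation "c" => (Real.exp 1 - 2) * lam ^ 2

include hX hR hbdd hsq hmean hlam0 hlamR

lemma fY_le : ∀ t ∈ Finset.Icc 1 T, ∀ᵐ ω ∂μ, fY μ X lam c t ω ≤ Real.exp 1 := by
  intro t ht
  have hσnn : 0 ≤ᵐ[μ] μ[fun ω' => X t ω' ^ 2|pastSigma X t] :=
    condExp_nonneg (ae_of_all _ fun ω => sq_nonneg _)
  have hlR : lam * R ≤ 1 := (le_div_iff₀ hR).mp hlamR
  have he2 : (0:ℝ) ≤ Real.exp 1 - 2 := by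
    nlinarith [Real.quadratic_le_exp_of_nonneg (zero_le_one (α := ℝ))]
  filter_upwards [hbdd t ht, hσnn] with ω h1 h2
  have : lam * X t ω - c * (μ[fun ω' => X t ω' ^ 2|pastSigma X t]) ω ≤ 1 := by
    nlinarith [mul_nonneg (mul_nonneg he2 (sq_nonneg lam)) h2]
  simpa [fY] using Real.exp_le_exp.2 this

lemma fY_prod_int : ∀ n, n ≤ T →
    Integrable (fun ω => ∏ t ∈ Finset.Icc 1 n, fY μ X lam c t ω) μ := by
  intro n hn
  have hmeas : Measurable (fun ω => ∏ t ∈ Finset.Icc 1 n, fY μ X lam c t ω) := by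
    refine Finset.measurable_prod _ fun t _ => ?_
    exact (((hX t).const_mul lam).sub
      (((stronglyMeasurable_condExp.mono (pastSigma_le X hX t)).measurable).const_mul c)).exp
  have hb : ∀ᵐ ω ∂μ, ∀ t ∈ Finset.Icc 1 n, fY μ X lam c t ω ≤ Real.exp 1 :=
    (Filter.eventually_all_finset _).2 fun t ht =>
      fY_le μ T X hX R hR hbdd hsq hmean lam hlam0 hlamR t
        (Finset.mem_Icc.2 ⟨(Finset.mem_Icc.1 ht).1, le_trans (Finset.mem_Icc.1 ht).2 hn⟩)
  refine Integrable.mono' (integrable_const (Real.exp 1 ^ n)) hmeas.aestronglyMeasurable ?_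
  filter_upwards [hb] with ω h
  rw [Real.norm_eq_abs, abs_of_nonneg (Finset.prod_nonneg fun t _ => fY_nonneg μ X lam c t ω)]
  calc ∏ t ∈ Finset.Icc 1 n, fY μ X lam c t ω
      ≤ ∏ _t ∈ Finset.Icc 1 n, Real.exp 1 :=
        Finset.prod_le_prod (fun t _ => fY_nonneg μ X lam c t ω) h
    _ = Real.exp 1 ^ n := by rw [Finset.prod_const, Nat.card_Icc]; norm_num

lemma freedman_key : ∀ n, n ≤ T →
    ∫ ω, ∏ t ∈ Finset.Icc 1 n, fY μ X lam c t ω ∂μ ≤ 1 := by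
  intro n
  induction n with
  | zero =>
    intro _
    simp
  | succ n ih =>
    intro hn1
    have hn : n ≤ T := by omega
    have hmem : n + 1 ∈ Finset.Icc 1 T := Finset.mem_Icc.2 ⟨by omega, hn1⟩
    set σ : Ω → ℝ := μ[fun ω' => X (n+1) ω' ^ 2|pastSigma X (n+1)] with hσ
    set A : Ω → ℝ := fun ω =>
      (∏ t ∈ Finset.Icc 1 n, fY μ X lam c t ω) * Real.exp (-(c * σ ω)) with hA
    set g : Ω → ℝ := fun ω => Real.exp (lam * X (n+1) ω) with hg
    have hA_m : Measurable[pastSigma X (n+1)] A := by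
      refine Measurable.mul ?_ ?_
      · refine Finset.measurable_prod _ fun t ht => ?_
        rw [Finset.mem_Icc] at ht
        have h1 : Measurable[pastSigma X (n+1)] (X t) := by
          refine measurable_of_mem_past X ?_
          simp only [Finset.mem_Icc]
          omega
        have h2 : Measurable[pastSigma X (n+1)] (μ[fun ω' => X t ω' ^ 2|pastSigma X t]) :=
          (stronglyMeasurable_condExp.mono
            (pastSigma_mono X (by omega : t ≤ n + 1))).measurable
        exact ((h1.const_mul lam).sub (h2.const_mul c)).exp
      · exact (((stronglyMeasurable_condExp (m := pastSigma X (n+1))).measurable.const_mul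
          c).neg).exp
    have hfg : (fun ω => A ω * g ω) = fun ω => ∏ t ∈ Finset.Icc 1 (n+1), fY μ X lam c t ω := by
      funext ω
      rw [Finset.prod_Icc_succ_top (by omega : 1 ≤ n + 1)]
      have hY : fY μ X lam c (n+1) ω = Real.exp (-(c * σ ω)) * Real.exp (lam * X (n+1) ω) := by
        rw [← Real.exp_add]
        unfold fY
        rw [← hσ]
        congr 1
        ring
      rw [hY]
      simp only [hA, hg]
      ring
    have hPn1_int : Integrable (fun ω => ∏ t ∈ Finset.Icc 1 (n+1), fY μ X lam c t ω) μ :=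
      fY_prod_int μ T X hX R hR hbdd hsq hmean lam hlam0 hlamR (n+1) hn1
    have hAg_int : Integrable (A * g) μ := by
      have h : (A * g) = fun ω => ∏ t ∈ Finset.Icc 1 (n+1), fY μ X lam c t ω := hfg
      rw [h]
      exact hPn1_int
    have hg_int : Integrable g μ := by
      refine Integrable.mono' (integrable_const (Real.exp 1))
        ((hX (n+1)).const_mul lam).exp.aestronglyMeasurable ?_
      have hlR : lam * R ≤ 1 := (le_div_iff₀ hR).mp hlamR
      filter_upwards [hbdd (n+1) hmem] with ω h
      rw [hg, Real.norm_eq_abs, abs_of_pos (Real.exp_pos _)]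
      exact Real.exp_le_exp.2 (by nlinarith)
    have hmul : μ[A * g|pastSigma X (n+1)] =ᵐ[μ] A * μ[g|pastSigma X (n+1)] :=
      condExp_mul_of_stronglyMeasurable_left hA_m.stronglyMeasurable hAg_int hg_int
    have hcond : μ[g|pastSigma X (n+1)] ≤ᵐ[μ] fun ω => Real.exp (c * σ ω) :=
      condexp_exp_le (pastSigma_le X hX (n+1)) (hX (n+1)) hR hlam0 hlamR
        (hbdd (n+1) hmem) (hsq (n+1) hmem) (hmean (n+1) hmem)
    have hle : μ[A * g|pastSigma X (n+1)] ≤ᵐ[μ]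
        fun ω => ∏ t ∈ Finset.Icc 1 n, fY μ X lam c t ω := by
      filter_upwards [hmul, hcond] with ω h1 h2
      rw [h1]
      simp only [Pi.mul_apply]
      have hA0 : 0 ≤ A ω :=
        mul_nonneg (Finset.prod_nonneg fun t _ => fY_nonneg μ X lam c t ω) (Real.exp_pos _).le
      calc A ω * (μ[g|pastSigma X (n+1)]) ω ≤ A ω * Real.exp (c * σ ω) :=
            mul_le_mul_of_nonneg_left h2 hA0
        _ = ∏ t ∈ Finset.Icc 1 n, fY μ X lam c t ω := by
            simp only [hA]
            rw [mul_assoc, ← Real.exp_add]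
            simp
    calc ∫ ω, ∏ t ∈ Finset.Icc 1 (n+1), fY μ X lam c t ω ∂μ
        = ∫ ω, (A * g) ω ∂μ := by rw [hfg.symm]; rfl
      _ = ∫ ω, (μ[A * g|pastSigma X (n+1)]) ω ∂μ :=
          (integral_condExp (pastSigma_le X hX (n+1))).symm
      _ ≤ ∫ ω, ∏ t ∈ Finset.Icc 1 n, fY μ X lam c t ω ∂μ :=
          integral_mono_ae integrable_condExp
            (fY_prod_int μ T X hX R hR hbdd hsq hmean lam hlam0 hlamR n hn) hle
      _ ≤ 1 := ih hn

end Key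

/-- **Freedman's inequality (modified form).**  If `X_1, …, X_T` satisfy `X_t ≤ R` a.s.,
have conditional mean zero and (conditionally integrable) second moments, then for any
`δ ∈ (0,1)` and any fixed `λ ∈ (0, 1/R]`, with probability at least `1 − δ`,
`S ≤ (e − 2) λ V + ln(1/δ)/λ` where `S = Σ_t X_t` and
`V = Σ_t E[X_t² | X_1, …, X_{t-1}]`. -/
theorem freedman_inequality
    {Ω : Type*} [m0 : MeasurableSpace Ω] (μ : Measure Ω) [IsProbabilityMeasure μ]
    (T : ℕ) (X : ℕ → Ω → ℝ) (hX : ∀ t, Measurable (X t))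
    (R : ℝ) (hR : 0 < R)
    (hbdd : ∀ t ∈ Finset.Icc 1 T, ∀ᵐ ω ∂μ, X t ω ≤ R)
    (hsq : ∀ t ∈ Finset.Icc 1 T, Integrable (fun ω => (X t ω) ^ 2) μ)
    (hmean : ∀ t ∈ Finset.Icc 1 T, μ[X t | pastSigma X t] =ᵐ[μ] 0)
    (δ lam : ℝ) (hδ : δ ∈ Set.Ioo (0 : ℝ) 1) (hlam : lam ∈ Set.Ioc (0 : ℝ) (1 / R)) :
    ENNReal.ofReal (1 - δ) ≤
      μ {ω | ∑ t ∈ Finset.Icc 1 T, X t ω ≤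
          (Real.exp 1 - 2) * lam *
            (∑ t ∈ Finset.Icc 1 T, (μ[fun ω' => (X t ω') ^ 2 | pastSigma X t]) ω)
          + Real.log (1 / δ) / lam} := by
  obtain ⟨hδ0, hδ1⟩ := hδ
  obtain ⟨hlam0, hlamR⟩ := hlam
  have hσmeas : ∀ t, Measurable (fun ω => (μ[fun ω' => X t ω' ^ 2|pastSigma X t]) ω) :=
    fun t => (stronglyMeasurable_condExp.mono (pastSigma_le X hX t)).measurable
  set W : Ω → ℝ := fun ω => Real.exp (lam * (∑ t ∈ Finset.Icc 1 T, X t ω) -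
    (Real.exp 1 - 2) * lam ^ 2 *
      (∑ t ∈ Finset.Icc 1 T, (μ[fun ω' => X t ω' ^ 2|pastSigma X t]) ω)) with hW
  have hWP : W = fun ω => ∏ t ∈ Finset.Icc 1 T,
      fY μ X lam ((Real.exp 1 - 2) * lam ^ 2) t ω := by
    funext ω
    simp only [hW, fY, ← Real.exp_sum]
    congr 1
    rw [Finset.sum_sub_distrib, Finset.mul_sum, Finset.mul_sum]
  have hWint : Integrable W μ := by
    rw [hWP]
    exact fY_prod_int μ T X hX R hR hbdd hsq hmean lam hlam0 hlamR T le_rfl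
  have hWle : ∫ ω, W ω ∂μ ≤ 1 := by
    rw [hWP]
    exact freedman_key μ T X hX R hR hbdd hsq hmean lam hlam0 hlamR T le_rfl
  have hmark : 1/δ * (μ {x | 1/δ ≤ W x}).toReal ≤ ∫ x, W x ∂μ :=
    mul_meas_ge_le_integral_of_nonneg (μ := μ) (f := W)
      (ae_of_all _ fun ω => (Real.exp_pos _).le) hWint (1/δ)
  have htoReal : (μ {x | 1/δ ≤ W x}).toReal ≤ δ := by
    have h0 : (0:ℝ) ≤ (μ {x | 1/δ ≤ W x}).toReal := ENNReal.toReal_nonneg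
    have h1 := hmark.trans hWle
    calc (μ {x | 1/δ ≤ W x}).toReal = δ * (1/δ * (μ {x | 1/δ ≤ W x}).toReal) := by
          field_simp
      _ ≤ δ * 1 := by nlinarith
      _ = δ := mul_one δ
  have hcompl_le : μ {x | 1/δ ≤ W x} ≤ ENNReal.ofReal δ :=
    (ENNReal.le_ofReal_iff_toReal_le (measure_ne_top μ _) hδ0.le).2 htoReal
  set E : Set Ω := {ω | ∑ t ∈ Finset.Icc 1 T, X t ω ≤
      (Real.exp 1 - 2) * lam *
        (∑ t ∈ Finset.Icc 1 T, (μ[fun ω' => (X t ω') ^ 2 | pastSigma X t]) ω)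
      + Real.log (1 / δ) / lam} with hE
  have hEm : MeasurableSet E := by
    rw [hE]
    apply measurableSet_le
    · exact Finset.measurable_sum _ fun t _ => hX t
    · exact ((Finset.measurable_sum _ fun t _ => hσmeas t).const_mul _).add_const _
  have hsub : Eᶜ ⊆ {x | 1/δ ≤ W x} := by
    intro ω hω
    simp only [hE, Set.mem_compl_iff, Set.mem_setOf_eq, not_le] at hω
    simp only [Set.mem_setOf_eq, hW]
    have h4 : lam * (Real.log (1/δ)/lam) = Real.log (1/δ) := by field_simp
    have h3 : lam * ((Real.exp 1 - 2) * lam *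
        (∑ t ∈ Finset.Icc 1 T, (μ[fun ω' => X t ω' ^ 2|pastSigma X t]) ω)
        + Real.log (1/δ)/lam) < lam * (∑ t ∈ Finset.Icc 1 T, X t ω) :=
      (mul_lt_mul_iff_right₀ hlam0).2 hω
    rw [mul_add, h4] at h3
    have h2 : Real.log (1/δ) ≤ lam * (∑ t ∈ Finset.Icc 1 T, X t ω) -
        (Real.exp 1 - 2) * lam ^ 2 *
          (∑ t ∈ Finset.Icc 1 T, (μ[fun ω' => X t ω' ^ 2|pastSigma X t]) ω) := by
      nlinarith
    calc 1/δ = Real.exp (Real.log (1/δ)) := (Real.exp_log (by positivity)).symm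
      _ ≤ _ := Real.exp_le_exp.2 h2
  have hEc : μ Eᶜ ≤ ENNReal.ofReal δ := (measure_mono hsub).trans hcompl_le
  calc ENNReal.ofReal (1 - δ) = 1 - ENNReal.ofReal δ := by
        rw [ENNReal.ofReal_sub _ hδ0.le, ENNReal.ofReal_one]
    _ ≤ 1 - μ Eᶜ := tsub_le_tsub_left hEc 1
    _ ≤ μ E := by
        rw [tsub_le_iff_right, measure_add_measure_compl hEm, measure_univ]
end

section
/- Variance condition for least squares: Let (X, Y) be random variables with Y real-valued and let f* be a (fixed measurable version of the) conditional mean f*(x) = E[Y | X = x]. Let f be a measurable real-valued function such that (f(X) − Y)² ≤ M² almost surely and (f*(X) − Y)² ≤ B² almost surely, for constants M, B > 0. Define φ := (f(X) − Y)² − (f*(X) − Y)². Then almost surely: E[φ | X] = (f(X) − f*(X))², and E[φ² | X] ≤ 2(M² + B²) · E[φ | X]. -/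
open MeasureTheory
open scoped ENNReal

private lemma vcls_aux {Ω : Type*} [mΩ : MeasurableSpace Ω]
    (μ : Measure Ω) [IsProbabilityMeasure μ]
    {m : MeasurableSpace Ω} (hm : m ≤ mΩ)
    (Y F G : Ω → ℝ)
    (hY : Measurable[mΩ] Y) (hYint : Integrable Y μ)
    (hF : Measurable[mΩ] F) (hG : Measurable[mΩ] G)
    (hFm : StronglyMeasurable[m] F) (hGm : StronglyMeasurable[m] G)
    (hGcond : G =ᵐ[μ] μ[Y | m])
    (M B : ℝ) (hM : 0 < M) (hB : 0 < B)
    (hfb : ∀ᵐ ω ∂μ, (F ω - Y ω) ^ 2 ≤ M ^ 2)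
    (hfsb : ∀ᵐ ω ∂μ, (G ω - Y ω) ^ 2 ≤ B ^ 2) :
    (μ[fun ω => (F ω - Y ω) ^ 2 - (G ω - Y ω) ^ 2 | m]
      =ᵐ[μ] fun ω => (F ω - G ω) ^ 2)
    ∧ ∀ᵐ ω ∂μ,
        (μ[fun ω' => ((F ω' - Y ω') ^ 2 - (G ω' - Y ω') ^ 2) ^ 2 | m]) ω
          ≤ 2 * (M ^ 2 + B ^ 2) *
            (μ[fun ω' => (F ω' - Y ω') ^ 2 - (G ω' - Y ω') ^ 2 | m]) ω := by
  have habs1 : ∀ᵐ ω ∂μ, |F ω - Y ω| ≤ M := by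
    filter_upwards [hfb] with ω h
    nlinarith [abs_nonneg (F ω - Y ω), sq_abs (F ω - Y ω)]
  have habs2 : ∀ᵐ ω ∂μ, |G ω - Y ω| ≤ B := by
    filter_upwards [hfsb] with ω h
    nlinarith [abs_nonneg (G ω - Y ω), sq_abs (G ω - Y ω)]
  have hbdd_int : ∀ (h : Ω → ℝ) (c : ℝ), Measurable[mΩ] h → (∀ᵐ ω ∂μ, |h ω| ≤ c) →
      Integrable h μ := fun h c hh hc =>
    (integrable_const c).mono' hh.aestronglyMeasurable (by simpa using hc)
  set g : Ω → ℝ := fun ω => F ω - G ω with hg_def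
  have hg_meas : Measurable[mΩ] g := hF.sub hG
  have hg_sm : StronglyMeasurable[m] g := hFm.sub hGm
  have hg_bd : ∀ᵐ ω ∂μ, |g ω| ≤ M + B := by
    filter_upwards [habs1, habs2] with ω h1 h2
    have : g ω = (F ω - Y ω) - (G ω - Y ω) := by simp only [hg_def]; ring
    rw [this]
    exact (abs_sub _ _).trans (add_le_add h1 h2)
  have hg2_int : Integrable (fun ω => g ω ^ 2) μ := by
    refine hbdd_int _ ((M + B) ^ 2) (hg_meas.pow_const 2) ?_
    filter_upwards [hg_bd] with ω h
    rw [abs_pow]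
    exact pow_le_pow_left₀ (abs_nonneg _) h 2
  have hres_int : Integrable (fun ω => G ω - Y ω) μ :=
    hbdd_int _ B (hG.sub hY) habs2
  have hfsX_int : Integrable G μ := by
    have hGeq : G = fun ω => (G ω - Y ω) + Y ω := by funext ω; ring
    rw [hGeq]
    exact hres_int.add hYint
  have hgres_int : Integrable (fun ω => g ω * (G ω - Y ω)) μ := by
    refine hbdd_int _ ((M + B) * B) (hg_meas.mul (hG.sub hY)) ?_
    filter_upwards [hg_bd, habs2] with ω h1 h2
    rw [abs_mul]
    exact mul_le_mul h1 h2 (abs_nonneg _) (by positivity)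
  set φ : Ω → ℝ := fun ω => (F ω - Y ω) ^ 2 - (G ω - Y ω) ^ 2 with hφ_def
  have hφ_meas : Measurable[mΩ] φ :=
    ((hF.sub hY).pow_const 2).sub ((hG.sub hY).pow_const 2)
  have hφ_bd : ∀ᵐ ω ∂μ, |φ ω| ≤ M ^ 2 + B ^ 2 := by
    filter_upwards [hfb, hfsb] with ω h1 h2
    have h3 : (0:ℝ) ≤ (F ω - Y ω) ^ 2 := sq_nonneg _
    have h4 : (0:ℝ) ≤ (G ω - Y ω) ^ 2 := sq_nonneg _
    rw [abs_le]; simp only [hφ_def]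
    constructor <;> [nlinarith; nlinarith]
  have hφ_int : Integrable φ μ := hbdd_int _ (M ^ 2 + B ^ 2) hφ_meas hφ_bd
  have hdecomp : φ = (fun ω => g ω ^ 2) + fun ω => (2 * g ω) * (G ω - Y ω) := by
    funext ω; simp only [hφ_def, hg_def, Pi.add_apply]; ring
  have hres_zero : μ[fun ω => G ω - Y ω | m] =ᵐ[μ] 0 := by
    have h1 := condExp_sub (m := m) (μ := μ) hfsX_int hYint (f := G) (g := Y)
    have h2 : μ[G | m] = G :=
      condExp_of_stronglyMeasurable hm hGm hfsX_int
    refine h1.trans ?_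
    rw [h2]
    filter_upwards [hGcond] with ω hω
    simp [hω]
  have h2g_int : Integrable (fun ω => (2 * g ω) * (G ω - Y ω)) μ := by
    have := hgres_int.const_mul 2
    simpa [mul_assoc] using this
  have hpull : μ[fun ω => (2 * g ω) * (G ω - Y ω) | m] =ᵐ[μ] 0 := by
    have hsm2 : StronglyMeasurable[m] (fun ω => 2 * g ω) :=
      (@stronglyMeasurable_const _ _ m _ (2:ℝ)).mul hg_sm
    have hmul := condExp_mul_of_stronglyMeasurable_left (m := m) (μ := μ) hsm2
      (g := fun ω => G ω - Y ω) h2g_int hres_int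
    calc μ[fun ω => (2 * g ω) * (G ω - Y ω) | m]
        =ᵐ[μ] (fun ω => 2 * g ω) * μ[fun ω => G ω - Y ω | m] := hmul
      _ =ᵐ[μ] 0 := by
          filter_upwards [hres_zero] with ω hω
          simp [Pi.mul_apply, hω]
  have key1 : μ[φ | m] =ᵐ[μ] fun ω => g ω ^ 2 := by
    have hadd := condExp_add (m := m) (μ := μ) hg2_int h2g_int
    rw [hdecomp]
    refine hadd.trans ?_
    have hg2eq : μ[fun ω => g ω ^ 2 | m] = fun ω => g ω ^ 2 :=
      condExp_of_stronglyMeasurable hm (hg_sm.pow 2) hg2_int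
    filter_upwards [hpull] with ω hω
    simp [hg2eq, hω]
  refine ⟨key1, ?_⟩
  set C : ℝ := 2 * (M ^ 2 + B ^ 2) with hC_def
  have hφ2_int : Integrable (fun ω => φ ω ^ 2) μ := by
    refine hbdd_int _ ((M ^ 2 + B ^ 2) ^ 2) (hφ_meas.pow_const 2) ?_
    filter_upwards [hφ_bd] with ω h
    rw [abs_pow]
    exact pow_le_pow_left₀ (abs_nonneg _) h 2
  have hptwise : ∀ᵐ ω ∂μ, φ ω ^ 2 ≤ C * g ω ^ 2 := by
    filter_upwards [hfb, hfsb] with ω h1 h2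
    have hid : φ ω = g ω * ((F ω - Y ω) + (G ω - Y ω)) := by
      simp only [hφ_def, hg_def]; ring
    have hsq : ((F ω - Y ω) + (G ω - Y ω)) ^ 2 ≤ C := by
      have := sq_nonneg ((F ω - Y ω) - (G ω - Y ω))
      simp only [hC_def]; nlinarith
    calc φ ω ^ 2 = g ω ^ 2 * ((F ω - Y ω) + (G ω - Y ω)) ^ 2 := by
          rw [hid]; ring
      _ ≤ g ω ^ 2 * C := mul_le_mul_of_nonneg_left hsq (sq_nonneg _)
      _ = C * g ω ^ 2 := mul_comm _ _
  have hCg2_int : Integrable (fun ω => C * g ω ^ 2) μ := hg2_int.const_mul C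
  have hmono := condExp_mono (m := m) (μ := μ) hφ2_int hCg2_int hptwise
  have hCg2 : μ[fun ω => C * g ω ^ 2 | m] = fun ω => C * g ω ^ 2 :=
    condExp_of_stronglyMeasurable hm
      ((@stronglyMeasurable_const _ _ m _ C).mul (hg_sm.pow 2)) hCg2_int
  filter_upwards [hmono, key1] with ω h1 h3
  calc (μ[fun ω' => φ ω' ^ 2 | m]) ω ≤ (μ[fun ω' => C * g ω' ^ 2 | m]) ω := h1
    _ = C * g ω ^ 2 := by rw [hCg2]
    _ = C * (μ[φ | m]) ω := by rw [h3]

/-- **Variance condition for least squares.**  If `f*` is (a measurable version of) the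
conditional mean of `Y` given `X`, `(f(X) − Y)² ≤ M²` a.s. and `(f*(X) − Y)² ≤ B²` a.s.,
then with `φ = (f(X) − Y)² − (f*(X) − Y)²` one has `E[φ | X] = (f(X) − f*(X))²` a.s. and
`E[φ² | X] ≤ 2 (M² + B²) E[φ | X]` a.s. -/
theorem variance_condition_least_squares
    {Ω 𝒳 : Type*} [MeasurableSpace Ω] [MeasurableSpace 𝒳]
    (μ : Measure Ω) [IsProbabilityMeasure μ]
    (X : Ω → 𝒳) (Y : Ω → ℝ) (hX : Measurable X) (hY : Measurable Y)
    (hYint : Integrable Y μ)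
    (fstar : 𝒳 → ℝ) (hfstarMeas : Measurable fstar)
    (hfstar : (fun ω => fstar (X ω)) =ᵐ[μ] μ[Y | MeasurableSpace.comap X inferInstance])
    (f : 𝒳 → ℝ) (hf : Measurable f)
    (M B : ℝ) (hM : 0 < M) (hB : 0 < B)
    (hfb : ∀ᵐ ω ∂μ, (f (X ω) - Y ω) ^ 2 ≤ M ^ 2)
    (hfsb : ∀ᵐ ω ∂μ, (fstar (X ω) - Y ω) ^ 2 ≤ B ^ 2) :
    (μ[fun ω => (f (X ω) - Y ω) ^ 2 - (fstar (X ω) - Y ω) ^ 2 |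
        MeasurableSpace.comap X inferInstance]
      =ᵐ[μ] fun ω => (f (X ω) - fstar (X ω)) ^ 2)
    ∧ ∀ᵐ ω ∂μ,
        (μ[fun ω' => ((f (X ω') - Y ω') ^ 2 - (fstar (X ω') - Y ω') ^ 2) ^ 2 |
            MeasurableSpace.comap X inferInstance]) ω
          ≤ 2 * (M ^ 2 + B ^ 2) *
            (μ[fun ω' => (f (X ω') - Y ω') ^ 2 - (fstar (X ω') - Y ω') ^ 2 |
                MeasurableSpace.comap X inferInstance]) ω := by
  have hXm : Measurable[MeasurableSpace.comap X inferInstance] X :=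
    Measurable.of_comap_le le_rfl
  exact vcls_aux μ hX.comap_le Y (fun ω => f (X ω)) (fun ω => fstar (X ω))
    hY hYint (hf.comp hX) (hfstarMeas.comp hX)
    ((hf.comp hXm).stronglyMeasurable) ((hfstarMeas.comp hXm).stronglyMeasurable)
    hfstar M B hM hB hfb hfsb
end

section
/- Improved online-to-batch conversion for non-negative random variables: Let {X_k}_{k=1}^K be a real-valued stochastic process adapted to a filtration {F_k} (X_k is F_k-measurable) with X_k ∈ [0, H] almost surely for some H > 0, and suppose KH ≥ 2. Then for any δ ∈ (0,1), with probability at least 1 − δ: Σ_{k=1}^K E[X_k | F_{k−1}] ≤ 2 Σ_{k=1}^K X_k + (16/3) H log(log₂(KH)/δ) + 2. -/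
open MeasureTheory
open scoped ENNReal

/-- **Improved online-to-batch conversion for non-negative random variables.**
If `{X_k}` is adapted to the filtration `{F_k}` with `X_k ∈ [0, H]` a.s. and `KH ≥ 2`,
then for any `δ ∈ (0,1)`, with probability at least `1 − δ`,
`Σ_{k=1}^K E[X_k | F_{k−1}] ≤ 2 Σ_{k=1}^K X_k + (16/3) H log(log₂(KH)/δ) + 2`. -/
theorem improved_online_to_batch
    {Ω : Type*} [m0 : MeasurableSpace Ω] (μ : Measure Ω) [IsProbabilityMeasure μ]
    (F : Filtration ℕ m0) (K : ℕ) (H : ℝ) (hH : 0 < H)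
    (X : ℕ → Ω → ℝ) (hadapt : ∀ k, StronglyMeasurable[F k] (X k))
    (hbdd : ∀ k ∈ Finset.Icc 1 K, ∀ᵐ ω ∂μ, X k ω ∈ Set.Icc (0 : ℝ) H)
    (hKH : 2 ≤ (K : ℝ) * H)
    (δ : ℝ) (hδ : δ ∈ Set.Ioo (0 : ℝ) 1) :
    ENNReal.ofReal (1 - δ) ≤
      μ {ω | ∑ k ∈ Finset.Icc 1 K, (μ[X k | F (k - 1)]) ω ≤
          2 * ∑ k ∈ Finset.Icc 1 K, X k ω
            + (16 / 3) * H * Real.log (Real.logb 2 ((K : ℝ) * H) / δ) + 2} := by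
  obtain ⟨hδ0, hδ1⟩ := hδ
  set l : ℝ := Real.log 2 / H with hl_def
  have hlog2_pos : (0:ℝ) < Real.log 2 := Real.log_pos (by norm_num)
  have hl0 : 0 ≤ l := div_nonneg hlog2_pos.le hH.le
  set CE : ℕ → Ω → ℝ := fun k => μ[X k | F (k - 1)] with hCE_def
  have h2H : (0:ℝ) < 2 * H := by linarith
  -- basic measurability
  have hXm : ∀ k, StronglyMeasurable (X k) := fun k => (hadapt k).mono (F.le k)
  have hCEm : ∀ k, StronglyMeasurable (CE k) :=
    fun k => stronglyMeasurable_condExp.mono (F.le (k - 1))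
  -- integrability of X k
  have hXint : ∀ k ∈ Finset.Icc 1 K, Integrable (X k) μ := by
    intro k hk
    refine (integrable_const H).mono' (hXm k).aestronglyMeasurable ?_
    filter_upwards [hbdd k hk] with ω hω
    rw [Real.norm_eq_abs, abs_of_nonneg hω.1]; exact hω.2
  -- a.e. bounds on CE k
  have hCEH : ∀ k ∈ Finset.Icc 1 K, ∀ᵐ ω ∂μ, CE k ω ≤ H := by
    intro k hk
    have h1 : μ[X k | F (k - 1)] ≤ᵐ[μ] μ[(fun _ => H) | F (k - 1)] :=
      condExp_mono (hXint k hk) (integrable_const H)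
        ((hbdd k hk).mono fun ω hω => hω.2)
    have h2 : μ[(fun _ => H : Ω → ℝ) | F (k - 1)] = fun _ => H :=
      condExp_const (F.le (k - 1)) H
    filter_upwards [h1] with ω hω1
    rw [h2] at hω1; exact hω1
  -- the supermartingale sums
  set S : ℕ → Ω → ℝ := fun n ω => ∑ k ∈ Finset.Icc 1 n, (CE k ω / (2 * H) - l * X k ω)
    with hS_def
  have hSm : ∀ n, StronglyMeasurable (S n) := by
    intro n
    exact Finset.stronglyMeasurable_fun_sum _ fun k _ =>
      (((hCEm k).measurable.div_const _).stronglyMeasurable).sub ((hXm k).const_mul l)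
  -- a.e. bound on exp (S n)
  have hexpS_bound : ∀ n, n ≤ K → ∀ᵐ ω ∂μ, Real.exp (S n ω) ≤ Real.exp (n * (1/2)) := by
    intro n hn
    have hall : ∀ᵐ ω ∂μ, ∀ k ∈ Finset.Icc 1 n,
        (X k ω ∈ Set.Icc (0:ℝ) H ∧ CE k ω ≤ H) := by
      rw [Filter.eventually_all_finset]
      intro k hk
      have hk' : k ∈ Finset.Icc 1 K := by
        simp only [Finset.mem_Icc] at hk ⊢; exact ⟨hk.1, hk.2.trans hn⟩
      filter_upwards [hbdd k hk', hCEH k hk'] with ω h1 h2 using ⟨h1, h2⟩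
    filter_upwards [hall] with ω hω
    rw [Real.exp_le_exp]
    calc S n ω ≤ ∑ _k ∈ Finset.Icc 1 n, (1/2 : ℝ) := by
          refine Finset.sum_le_sum fun k hk => ?_
          obtain ⟨hX, hCEk⟩ := hω k hk
          have h1 : 0 ≤ l * X k ω := mul_nonneg hl0 hX.1
          have h2 : CE k ω / (2*H) ≤ H / (2*H) := (div_le_div_iff_of_pos_right h2H).mpr hCEk
          have hH2 : H / (2*H) = 1/2 := by field_simp
          linarith
      _ = n * (1/2) := by
          rw [Finset.sum_const, Nat.card_Icc]; simp [nsmul_eq_mul]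
  have hexpS_int : ∀ n, n ≤ K → Integrable (fun ω => Real.exp (S n ω)) μ := by
    intro n hn
    refine (integrable_const (Real.exp (n * (1/2)))).mono'
      ((hSm n).measurable.exp.stronglyMeasurable).aestronglyMeasurable ?_
    filter_upwards [hexpS_bound n hn] with ω hω
    rw [Real.norm_eq_abs, abs_of_nonneg (Real.exp_pos _).le]; exact hω
  -- key supermartingale estimate
  have key : ∀ n, n ≤ K → ∫ ω, Real.exp (S n ω) ∂μ ≤ 1 := by
    intro n
    induction n with
    | zero =>
      intro _
      simp [hS_def]
    | succ n ih =>
      intro hn1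
      have hn : n ≤ K := Nat.le_of_succ_le hn1
      have hn1' : n + 1 ∈ Finset.Icc 1 K := by
        simp only [Finset.mem_Icc]; omega
      set W : Ω → ℝ := fun ω => Real.exp (S n ω) * Real.exp (CE (n+1) ω / (2*H)) with hW_def
      set E : Ω → ℝ := fun ω => Real.exp (-(l * X (n+1) ω)) with hE_def
      have hsplit : ∀ ω, Real.exp (S (n+1) ω) = W ω * E ω := by
        intro ω
        rw [hW_def, hE_def]
        simp only
        rw [← Real.exp_add, ← Real.exp_add]
        congr 1
        simp only [hS_def]
        rw [Finset.sum_Icc_succ_top (by norm_num : 1 ≤ n + 1)]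
        ring
      -- W is F n measurable
      have hWm : StronglyMeasurable[F n] W := by
        have hSnm : StronglyMeasurable[F n] (S n) := by
          refine Finset.stronglyMeasurable_fun_sum _ fun k hk => ?_
          simp only [Finset.mem_Icc] at hk
          have h1 : StronglyMeasurable[F n] (CE k) :=
            stronglyMeasurable_condExp.mono (F.mono (by omega : k - 1 ≤ n))
          have h2 : StronglyMeasurable[F n] (X k) :=
            (hadapt k).mono (F.mono hk.2)
          exact (continuous_id.div_const _ |>.comp_stronglyMeasurable h1).sub
            (h2.const_mul l)
        have hCEn : StronglyMeasurable[F n] (CE (n+1)) := stronglyMeasurable_condExp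
        exact (Real.continuous_exp.comp_stronglyMeasurable hSnm).mul
          (Real.continuous_exp.comp_stronglyMeasurable
            (continuous_id.div_const _ |>.comp_stronglyMeasurable hCEn))
      -- bounds
      have hWbound : ∀ᵐ ω ∂μ, ‖W ω‖ ≤ Real.exp (n * (1/2)) * Real.exp (1/2) := by
        filter_upwards [hexpS_bound n hn, hCEH (n+1) hn1'] with ω h1 h2
        rw [Real.norm_eq_abs, abs_of_nonneg (by positivity)]
        have h3 : Real.exp (CE (n+1) ω / (2*H)) ≤ Real.exp (1/2) := by
          rw [Real.exp_le_exp]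
          have h4 : CE (n+1) ω / (2*H) ≤ H / (2*H) := (div_le_div_iff_of_pos_right h2H).mpr h2
          have hH2 : H / (2*H) = 1/2 := by field_simp
          linarith
        exact mul_le_mul h1 h3 (Real.exp_pos _).le (Real.exp_pos _).le
      have hEint : Integrable E μ := by
        refine (integrable_const 1).mono'
          ((((hXm (n+1)).measurable.const_mul l).neg.exp.stronglyMeasurable).aestronglyMeasurable) ?_
        filter_upwards [hbdd (n+1) hn1'] with ω hω
        rw [Real.norm_eq_abs, abs_of_nonneg (Real.exp_pos _).le]
        have h1 : 0 ≤ l * X (n+1) ω := mul_nonneg hl0 hω.1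
        calc Real.exp (-(l * X (n+1) ω)) ≤ Real.exp 0 := by
              rw [Real.exp_le_exp]; linarith
          _ = 1 := Real.exp_zero
      -- pointwise convexity bound : exp(-l x) ≤ 1 - x/(2H) on [0, H]
      have hptwise : ∀ᵐ ω ∂μ, E ω ≤ 1 - X (n+1) ω / (2*H) := by
        filter_upwards [hbdd (n+1) hn1'] with ω hω
        obtain ⟨hx0, hxH⟩ := hω
        set x := X (n+1) ω with hx_def
        have hxH1 : x / H ≤ 1 := (div_le_one hH).2 hxH
        have hxH0 : 0 ≤ x / H := div_nonneg hx0 hH.le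
        have hconv := convexOn_exp.2 (Set.mem_univ (0:ℝ)) (Set.mem_univ (-Real.log 2))
          (by linarith : (0:ℝ) ≤ 1 - x/H) hxH0 (by ring)
        have hcomb : (1 - x/H) • (0:ℝ) + (x/H) • (-Real.log 2) = -(l * x) := by
          simp only [smul_eq_mul, hl_def]
          field_simp
          ring
        rw [hcomb] at hconv
        have hexp2 : Real.exp (-Real.log 2) = 1/2 := by
          rw [Real.exp_neg, Real.exp_log (by norm_num : (0:ℝ) < 2)]; norm_num
        rw [Real.exp_zero, hexp2] at hconv
        have hfin : (1 - x/H) • (1:ℝ) + (x/H) • (1/2 : ℝ) = 1 - x/(2*H) := by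
          simp only [smul_eq_mul]; field_simp; ring
        rw [hfin] at hconv
        exact hconv
      have hRHS_int : Integrable (fun ω => 1 - X (n+1) ω / (2*H)) μ :=
        (integrable_const 1).sub ((hXint (n+1) hn1').div_const _)
      -- conditional expectation bound
      have hcond_le : μ[E | F n] ≤ᵐ[μ] fun ω => 1 - CE (n+1) ω / (2*H) := by
        have h1 : μ[E | F n] ≤ᵐ[μ] μ[(fun ω => 1 - X (n+1) ω / (2*H)) | F n] :=
          condExp_mono hEint hRHS_int hptwise
        have ha : μ[(fun ω => (1:ℝ) - X (n+1) ω / (2*H)) | F n]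
            =ᵐ[μ] μ[(fun _ => (1:ℝ)) | F n] - μ[(fun ω => X (n+1) ω / (2*H)) | F n] :=
          condExp_sub (m := F n) (integrable_const 1) ((hXint (n+1) hn1').div_const _)
        have hb : μ[(fun _ => (1:ℝ)) | F n] = fun _ => (1:ℝ) :=
          condExp_const (F.le n) (1:ℝ)
        have hc : μ[(fun ω => X (n+1) ω / (2*H)) | F n]
            =ᵐ[μ] fun ω => CE (n+1) ω / (2*H) := by
          have heq : (fun ω => X (n+1) ω / (2*H)) = (2*H)⁻¹ • (X (n+1)) := by
            funext ω; simp [div_eq_inv_mul, smul_eq_mul]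
          rw [heq]
          refine (condExp_smul (m := F n) ((2*H)⁻¹) (X (n+1))).trans ?_
          have hce : μ[X (n+1) | F n] = CE (n+1) := by simp [hCE_def]
          rw [hce]
          filter_upwards with ω
          simp [smul_eq_mul, div_eq_inv_mul]
        filter_upwards [h1, ha, hc] with ω hω1 hωa hωc
        simp only [Pi.sub_apply] at hωa
        calc (μ[E | F n]) ω ≤ (μ[(fun ω => 1 - X (n+1) ω / (2*H)) | F n]) ω := hω1
          _ = 1 - CE (n+1) ω / (2*H) := by
              rw [hωa, hb, hωc]
      -- W * E integrable
      have hWEint : Integrable (fun ω => W ω * E ω) μ := by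
        have heq : (fun ω => W ω * E ω) = fun ω => Real.exp (S (n+1) ω) := by
          funext ω; rw [hsplit ω]
        rw [heq]; exact hexpS_int (n+1) hn1
      -- pull-out property
      have hpull : μ[(fun ω => W ω * E ω) | F n] =ᵐ[μ] fun ω => W ω * (μ[E | F n]) ω := by
        have := condExp_stronglyMeasurable_mul_of_bound (F.le n) hWm hEint
          (Real.exp (n * (1/2)) * Real.exp (1/2)) hWbound
        filter_upwards [this] with ω hω
        exact hω
      -- main chain
      calc ∫ ω, Real.exp (S (n+1) ω) ∂μ
          = ∫ ω, W ω * E ω ∂μ := integral_congr_ae (Filter.Eventually.of_forall hsplit)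
        _ = ∫ ω, (μ[(fun ω => W ω * E ω) | F n]) ω ∂μ := (integral_condExp (F.le n)).symm
        _ = ∫ ω, W ω * (μ[E | F n]) ω ∂μ := integral_congr_ae hpull
        _ ≤ ∫ ω, Real.exp (S n ω) ∂μ := by
            refine integral_mono_ae (integrable_condExp.congr hpull) (hexpS_int n hn) ?_
            filter_upwards [hcond_le] with ω hω
            have hW0 : 0 ≤ W ω := by positivity
            set a := CE (n+1) ω / (2*H) with ha_def
            have h1 : W ω * (μ[E | F n]) ω ≤ W ω * (1 - a) :=
              mul_le_mul_of_nonneg_left hω hW0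
            have h2 : Real.exp a * (1 - a) ≤ 1 := by
              have h3 : 1 - a ≤ Real.exp (-a) := by
                have := Real.add_one_le_exp (-a); linarith
              calc Real.exp a * (1 - a) ≤ Real.exp a * Real.exp (-a) :=
                    mul_le_mul_of_nonneg_left h3 (Real.exp_pos _).le
                _ = 1 := by rw [← Real.exp_add]; simp
            calc W ω * (μ[E | F n]) ω ≤ W ω * (1 - a) := h1
              _ = Real.exp (S n ω) * (Real.exp a * (1 - a)) := by rw [hW_def]; ring
              _ ≤ Real.exp (S n ω) * 1 :=
                  mul_le_mul_of_nonneg_left h2 (Real.exp_pos _).le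
              _ = Real.exp (S n ω) := mul_one _
        _ ≤ 1 := ih hn
  -- Markov's inequality
  have hδinv : (0:ℝ) < 1/δ := by positivity
  set B : Set Ω := {ω | 1/δ ≤ Real.exp (S K ω)} with hB_def
  have hBmeas : MeasurableSet B :=
    measurableSet_le measurable_const ((hSm K).measurable.exp)
  have hmB : (μ B).toReal ≤ δ := by
    have hmk := mul_meas_ge_le_integral_of_nonneg
      (Filter.Eventually.of_forall fun ω => (Real.exp_pos (S K ω)).le)
      (hexpS_int K le_rfl) (1/δ)
    have h2 : (1/δ) * (μ B).toReal ≤ 1 := hmk.trans (key K le_rfl)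
    have h3 : 0 ≤ (μ B).toReal := ENNReal.toReal_nonneg
    have h4 : δ * ((1/δ) * (μ B).toReal) = (μ B).toReal := by
      field_simp
    nlinarith [mul_le_mul_of_nonneg_left h2 hδ0.le]
  have hμB : μ B ≤ ENNReal.ofReal δ := by
    rw [← ENNReal.ofReal_toReal (measure_ne_top μ B)]
    exact ENNReal.ofReal_le_ofReal hmB
  have hcompl : ENNReal.ofReal (1-δ) ≤ μ Bᶜ := by
    rw [measure_compl hBmeas (measure_ne_top μ B), measure_univ]
    calc ENNReal.ofReal (1-δ) = 1 - ENNReal.ofReal δ := by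
          rw [← ENNReal.ofReal_one, ← ENNReal.ofReal_sub _ hδ0.le]
      _ ≤ 1 - μ B := tsub_le_tsub_left hμB 1
  refine hcompl.trans (measure_mono_ae ?_)
  -- a.e. inclusion of Bᶜ in the target event
  have hgood : ∀ᵐ ω ∂μ, ∀ k ∈ Finset.Icc 1 K, 0 ≤ X k ω := by
    rw [Filter.eventually_all_finset]
    intro k hk
    filter_upwards [hbdd k hk] with ω hω using hω.1
  filter_upwards [hgood] with ω hω hmem
  have hmem' : Real.exp (S K ω) < 1/δ := not_le.mp hmem
  show ∑ k ∈ Finset.Icc 1 K, CE k ω ≤ _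
  -- from exp (S K ω) < 1/δ deduce S K ω < log (1/δ)
  have hSlt : S K ω < Real.log (1/δ) := by
    have h2 : Real.exp (S K ω) < Real.exp (Real.log (1/δ)) := by
      rw [Real.exp_log hδinv]; exact hmem'
    exact Real.exp_lt_exp.mp h2
  have hSplit : S K ω = (∑ k ∈ Finset.Icc 1 K, CE k ω) / (2*H)
      - l * ∑ k ∈ Finset.Icc 1 K, X k ω := by
    simp only [hS_def]
    rw [Finset.sum_sub_distrib, ← Finset.sum_div, ← Finset.mul_sum]
  set A : ℝ := ∑ k ∈ Finset.Icc 1 K, X k ω with hA_def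
  set C : ℝ := ∑ k ∈ Finset.Icc 1 K, CE k ω with hC_def
  have hA0 : 0 ≤ A := Finset.sum_nonneg fun k hk => hω k hk
  have hlog2le1 : Real.log 2 ≤ 1 := by
    have := Real.log_le_sub_one_of_pos (by norm_num : (0:ℝ) < 2)
    linarith
  have ht0 : 0 < Real.log (1/δ) := Real.log_pos (by rw [lt_div_iff₀ hδ0]; linarith)
  have hlogb1 : 1 ≤ Real.logb 2 ((K:ℝ) * H) := by
    have h1 : Real.logb 2 2 ≤ Real.logb 2 ((K:ℝ) * H) :=
      Real.logb_le_logb_of_le (by norm_num) (by norm_num) hKH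
    rwa [Real.logb_self_eq_one (by norm_num)] at h1
  have hLge : Real.log (1/δ) ≤ Real.log (Real.logb 2 ((K:ℝ) * H) / δ) := by
    have h1 : 1/δ ≤ Real.logb 2 ((K:ℝ) * H) / δ := by gcongr
    exact Real.log_le_log hδinv h1
  -- from S K ω < log(1/δ): C < 2H log(1/δ) + 2 log 2 * A
  rw [hSplit] at hSlt
  have hC_lt : C < 2*H*Real.log (1/δ) + 2 * Real.log 2 * A := by
    have h1 : C / (2*H) < Real.log (1/δ) + l * A := by linarith
    have h2 := (div_lt_iff₀ h2H).mp h1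
    have hlA : l * A * (2*H) = 2 * Real.log 2 * A := by
      rw [hl_def]; field_simp
    nlinarith
  set L : ℝ := Real.log (Real.logb 2 ((K:ℝ) * H) / δ) with hL_def
  have hfin1 : 2 * Real.log 2 * A ≤ 2 * A := by nlinarith
  have hfin2 : 2*H*Real.log (1/δ) ≤ (16/3) * H * L := by nlinarith
  linarith
end

section
/- Error decomposition: For any tuple Q = {Q_h : S × A → ℝ}_{h=1}^H of bounded measurable functions (with Q_{H+1} ≡ 0) and any policies π, π̃ of an episodic MDP M, SubOpt_π^M(π̃) = Σ_{h=1}^H E_π[ E_h^{π̃}(Q_h, Q_{h+1})(s_h, a_h) ] + Q_1(s₁, π̃_1) − V_1^{π̃}(s₁) + SubOpt_π^{M(Q, π̃)}(π̃), where Q_1(s₁, π̃_1) := ∫_A Q_1(s₁, a) π̃_1(da|s₁). -/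
open MeasureTheory
open scoped ENNReal

/-- An episodic time-inhomogeneous MDP: measurable state and action spaces, horizon `H`,
Markov transition kernels `P h : S × A → P(S)`, mean reward functions `r h`, and a fixed
initial state `s1`.  Step indices `h = 1, …, H` are the meaningful ones. -/
structure EpisodicMDP (S A : Type*) [MeasurableSpace S] [MeasurableSpace A] where
  H : ℕ
  P : ℕ → S × A → Measure S
  P_prob : ∀ h sa, IsProbabilityMeasure (P h sa)
  P_meas : ∀ h, Measurable (P h)
  r : ℕ → S × A → ℝ
  r_meas : ∀ h, Measurable (r h)
  s1 : S

variable {S A : Type*} [MeasurableSpace S] [MeasurableSpace A]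

/-- A (Markov, time-inhomogeneous) policy, as a family of action kernels `π h : S → P(A)`. -/
def PolicyKer (S A : Type*) [MeasurableSpace S] [MeasurableSpace A] :=
  ℕ → S → Measure A

/-- `pol` is a genuine policy: each `pol h s` is a probability measure, measurably in `s`. -/
def IsPolicy (pol : PolicyKer S A) : Prop :=
  (∀ h s, IsProbabilityMeasure (pol h s)) ∧ ∀ h, Measurable (pol h)

/-- Backward-recursion helper: `Qaux M rw pol n h` is the action-value function at step `h`
when `n` more reward terms remain (so `n = H + 1 - h` gives `Q_h`, with `Q_{H+1} ≡ 0`). -/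
noncomputable def Qaux (M : EpisodicMDP S A) (rw : ℕ → S × A → ℝ) (pol : PolicyKer S A) :
    ℕ → ℕ → S × A → ℝ
  | 0, _, _ => 0
  | n + 1, h, sa =>
      rw h sa + ∫ s', (∫ a', Qaux M rw pol n (h + 1) (s', a') ∂(pol (h + 1) s')) ∂(M.P h sa)

/-- Action-value function `Q^{pol}_h` in the MDP with transitions of `M` and rewards `rw`
(with the convention `Q_{H+1} ≡ 0`). -/
noncomputable def Qval (M : EpisodicMDP S A) (rw : ℕ → S × A → ℝ) (pol : PolicyKer S A)
    (h : ℕ) : S × A → ℝ :=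
  Qaux M rw pol (M.H + 1 - h) h

/-- Value function `V^{pol}_h`. -/
noncomputable def Vval (M : EpisodicMDP S A) (rw : ℕ → S × A → ℝ) (pol : PolicyKer S A)
    (h : ℕ) (s : S) : ℝ :=
  ∫ a, Qval M rw pol h (s, a) ∂(pol h s)

/-- Law of the state `s_h` (for `h ≥ 1`) along the trajectory generated from the initial
state by the policy `pol`. -/
noncomputable def stateLaw (M : EpisodicMDP S A) (pol : PolicyKer S A) : ℕ → Measure S
  | 0 => Measure.dirac M.s1
  | 1 => Measure.dirac M.s1
  | n + 2 =>
      (((stateLaw M pol (n + 1)).bind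
          (fun s => (pol (n + 1) s).map (fun a => ((s, a) : S × A)))).bind (M.P (n + 1)))

/-- Occupancy measure `d^{pol}_h`: the law of `(s_h, a_h)` under `pol` (for `h ≥ 1`). -/
noncomputable def occLaw (M : EpisodicMDP S A) (pol : PolicyKer S A) (h : ℕ) :
    Measure (S × A) :=
  (stateLaw M pol h).bind (fun s => (pol h s).map (fun a => ((s, a) : S × A)))

/-- The Bellman operator `(T_h^{pol} f)(s,a) = r_h(s,a) + ∫∫ f(s',a') pol_{h+1}(da'|s') P_h(ds'|s,a)`. -/
noncomputable def bellmanOp (M : EpisodicMDP S A) (pol : PolicyKer S A) (h : ℕ)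
    (f : S × A → ℝ) : S × A → ℝ :=
  fun sa => M.r h sa + ∫ s', (∫ a', f (s', a') ∂(pol (h + 1) s')) ∂(M.P h sa)

/-- Bellman error `E_h^{pol}(f_h, f_{h+1}) = T_h^{pol} f_{h+1} − f_h`. -/
noncomputable def bellmanErr (M : EpisodicMDP S A) (pol : PolicyKer S A) (h : ℕ)
    (fh fnext : S × A → ℝ) : S × A → ℝ :=
  fun sa => bellmanOp M pol h fnext sa - fh sa

/-- The reward of the induced MDP `M(Q, pol)`: `r_h − E_h^{pol}(Q_h, Q_{h+1})`. -/
noncomputable def inducedReward (M : EpisodicMDP S A) (pol : PolicyKer S A)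
    (Q : ℕ → S × A → ℝ) : ℕ → S × A → ℝ :=
  fun h sa => M.r h sa - bellmanErr M pol h (Q h) (Q (h + 1)) sa

/-- Sub-optimality of `polT` against the comparator `polC` in the MDP with transitions of
`M` and rewards `rw`. -/
noncomputable def subOpt (M : EpisodicMDP S A) (rw : ℕ → S × A → ℝ)
    (polC polT : PolicyKer S A) : ℝ :=
  Vval M rw polC 1 M.s1 - Vval M rw polT 1 M.s1


section aux
variable {α β : Type*} [MeasurableSpace α] [MeasurableSpace β]

lemma bdd_integrable {μ : Measure α} [IsFiniteMeasure μ] {f : α → ℝ} (hf : Measurable f)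
    {C : ℝ} (hC : ∀ x, |f x| ≤ C) : Integrable f μ :=
  (integrable_const C).mono' hf.aestronglyMeasurable
    (ae_of_all _ fun x => (Real.norm_eq_abs _).le.trans (hC x))

lemma isProb_bind {μ : Measure α} [IsProbabilityMeasure μ] {κ : α → Measure β}
    (hκ : Measurable κ) (hκp : ∀ a, IsProbabilityMeasure (κ a)) :
    IsProbabilityMeasure (μ.bind κ) := by
  constructor
  rw [Measure.bind_apply MeasurableSet.univ hκ.aemeasurable]
  have : ∀ a, κ a Set.univ = 1 := fun a => (hκp a).measure_univ
  simp [this]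

lemma isFin_bind {μ : Measure α} [IsProbabilityMeasure μ] {κ : α → Measure β}
    (hκ : Measurable κ) (hκp : ∀ a, IsProbabilityMeasure (κ a)) :
    IsFiniteMeasure (μ.bind κ) := by haveI := isProb_bind (μ := μ) hκ hκp; infer_instance

lemma integral_bind' {μ : Measure α} [IsProbabilityMeasure μ] {κ : α → Measure β}
    (hκ : Measurable κ) (hκp : ∀ a, IsProbabilityMeasure (κ a))
    {f : β → ℝ} (hf : Measurable f) {C : ℝ} (hC : ∀ x, |f x| ≤ C) :
    ∫ x, f x ∂(μ.bind κ) = ∫ a, ∫ x, f x ∂(κ a) ∂μ := by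
  haveI := isProb_bind (μ := μ) hκ hκp
  set p : β → ℝ≥0∞ := fun x => ENNReal.ofReal (f x) with hp
  set q : β → ℝ≥0∞ := fun x => ENNReal.ofReal (-f x) with hq
  have hpm : Measurable p := hf.ennreal_ofReal
  have hqm : Measurable q := hf.neg.ennreal_ofReal
  have hLp : Measurable fun a => ∫⁻ x, p x ∂κ a :=
    (Measure.measurable_lintegral hpm).comp hκ
  have hLq : Measurable fun a => ∫⁻ x, q x ∂κ a :=
    (Measure.measurable_lintegral hqm).comp hκ
  have hLpb : ∀ a, ∫⁻ x, p x ∂κ a ≤ ENNReal.ofReal C := by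
    intro a
    haveI := hκp a
    calc ∫⁻ x, p x ∂κ a ≤ ∫⁻ _, ENNReal.ofReal C ∂κ a :=
          lintegral_mono fun x => ENNReal.ofReal_le_ofReal ((le_abs_self _).trans (hC x))
      _ = ENNReal.ofReal C := by simp
  have hLqb : ∀ a, ∫⁻ x, q x ∂κ a ≤ ENNReal.ofReal C := by
    intro a
    haveI := hκp a
    calc ∫⁻ x, q x ∂κ a ≤ ∫⁻ _, ENNReal.ofReal C ∂κ a :=
          lintegral_mono fun x =>
            ENNReal.ofReal_le_ofReal ((neg_le_abs _).trans (hC x))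
      _ = ENNReal.ofReal C := by simp
  have hint : ∀ (ν : Measure β), IsProbabilityMeasure ν → Integrable f ν := by
    intro ν hν; haveI := hν; exact bdd_integrable hf hC
  have hLHS := integral_eq_lintegral_pos_part_sub_lintegral_neg_part
    (μ := μ.bind κ) (bdd_integrable hf hC)
  rw [hLHS, Measure.lintegral_bind hκ.aemeasurable hpm.aemeasurable,
    Measure.lintegral_bind hκ.aemeasurable hqm.aemeasurable]
  have hpt : ∀ a, ∫ x, f x ∂κ a = (∫⁻ x, p x ∂κ a).toReal - (∫⁻ x, q x ∂κ a).toReal := by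
    intro a
    exact integral_eq_lintegral_pos_part_sub_lintegral_neg_part (hint _ (hκp a))
  rw [integral_congr_ae (ae_of_all _ hpt)]
  have hintp : Integrable (fun a => (∫⁻ x, p x ∂κ a).toReal) μ := by
    apply bdd_integrable hLp.ennreal_toReal (C := (ENNReal.ofReal C).toReal)
    intro a
    rw [abs_of_nonneg ENNReal.toReal_nonneg]
    exact ENNReal.toReal_mono ENNReal.ofReal_ne_top (hLpb a)
  have hintq : Integrable (fun a => (∫⁻ x, q x ∂κ a).toReal) μ := by
    apply bdd_integrable hLq.ennreal_toReal (C := (ENNReal.ofReal C).toReal)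
    intro a
    rw [abs_of_nonneg ENNReal.toReal_nonneg]
    exact ENNReal.toReal_mono ENNReal.ofReal_ne_top (hLqb a)
  rw [integral_sub hintp hintq,
    integral_toReal hLp.aemeasurable
      (ae_of_all _ fun a => lt_of_le_of_lt (hLpb a) ENNReal.ofReal_lt_top),
    integral_toReal hLq.aemeasurable
      (ae_of_all _ fun a => lt_of_le_of_lt (hLqb a) ENNReal.ofReal_lt_top)]

lemma measurable_kint {κ : α → Measure β} (hκ : Measurable κ)
    (hκp : ∀ a, IsProbabilityMeasure (κ a))
    {f : β → ℝ} (hf : Measurable f) {C : ℝ} (hC : ∀ x, |f x| ≤ C) :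
    Measurable (fun a => ∫ x, f x ∂κ a) ∧ ∀ a, |∫ x, f x ∂κ a| ≤ C := by
  constructor
  · have hpt : (fun a => ∫ x, f x ∂κ a) = fun a =>
        (∫⁻ x, ENNReal.ofReal (f x) ∂κ a).toReal -
        (∫⁻ x, ENNReal.ofReal (-f x) ∂κ a).toReal := by
      funext a
      haveI := hκp a
      exact integral_eq_lintegral_pos_part_sub_lintegral_neg_part (bdd_integrable hf hC)
    rw [hpt]
    exact (((Measure.measurable_lintegral hf.ennreal_ofReal).comp hκ).ennreal_toReal).sub
      (((Measure.measurable_lintegral hf.neg.ennreal_ofReal).comp hκ).ennreal_toReal)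
  · intro a
    haveI := hκp a
    have := norm_integral_le_of_norm_le_const (μ := κ a) (f := f) (C := C)
      (ae_of_all _ fun x => (Real.norm_eq_abs _).le.trans (hC x))
    simpa [Real.norm_eq_abs] using this
end aux

section pair
variable {α β : Type*} [MeasurableSpace α] [MeasurableSpace β]

lemma measurable_pairK {pol : α → Measure β} (hpol : Measurable pol)
    (hp : ∀ s, IsProbabilityMeasure (pol s)) :
    Measurable (fun s => (pol s).map (fun b => ((s, b) : α × β))) := by
  apply Measure.measurable_of_measurable_coe
  intro t ht
  have : (fun s => (pol s).map (fun b => ((s, b) : α × β)) t)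
      = fun s => pol s (Prod.mk s ⁻¹' t) := by
    funext s
    exact Measure.map_apply measurable_prodMk_left ht
  rw [this]
  haveI : ProbabilityTheory.IsMarkovKernel
      (⟨pol, hpol⟩ : ProbabilityTheory.Kernel α β) := ⟨fun a => hp a⟩
  exact ProbabilityTheory.Kernel.measurable_kernel_prodMk_left
    (κ := (⟨pol, hpol⟩ : ProbabilityTheory.Kernel α β)) ht

lemma pairK_prob {pol : α → Measure β} (hp : ∀ s, IsProbabilityMeasure (pol s)) (s : α) :
    IsProbabilityMeasure ((pol s).map (fun b => ((s, b) : α × β))) := by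
  haveI := hp s
  exact Measure.isProbabilityMeasure_map measurable_prodMk_left.aemeasurable

lemma integral_pairK {pol : α → Measure β} {F : α × β → ℝ} (hF : Measurable F) (s : α) :
    ∫ p, F p ∂((pol s).map (fun b => ((s, b) : α × β))) = ∫ b, F (s, b) ∂(pol s) :=
  integral_map measurable_prodMk_left.aemeasurable
    (hF.aestronglyMeasurable)

lemma measurable_kint_pair {κ : α → Measure β} (hκ : Measurable κ)
    (hκp : ∀ a, IsProbabilityMeasure (κ a))
    {F : α × β → ℝ} (hF : Measurable F) {C : ℝ} (hC : ∀ p, |F p| ≤ C) :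
    Measurable (fun a => ∫ b, F (a, b) ∂κ a) ∧ ∀ a, |∫ b, F (a, b) ∂κ a| ≤ C := by
  have hrw : (fun a => ∫ b, F (a, b) ∂κ a)
      = fun a => ∫ p, F p ∂((κ a).map (fun b => ((a, b) : α × β))) := by
    funext a; rw [integral_pairK hF]
  have h := measurable_kint (measurable_pairK hκ hκp) (pairK_prob hκp) hF hC
  refine ⟨hrw ▸ h.1, fun a => ?_⟩
  have := h.2 a
  rwa [integral_pairK hF] at this
end pair

section mdp
variable {S A : Type*} [MeasurableSpace S] [MeasurableSpace A]

variable (M : EpisodicMDP S A) (pol : PolicyKer S A)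

lemma Qaux_zero (rw : ℕ → S × A → ℝ) (h : ℕ) : Qaux M rw pol 0 h = 0 := rfl

lemma Qaux_succ (rw : ℕ → S × A → ℝ) (n h : ℕ) (sa : S × A) :
    Qaux M rw pol (n + 1) h sa =
      rw h sa + ∫ s', (∫ a', Qaux M rw pol n (h + 1) (s', a') ∂(pol (h + 1) s')) ∂(M.P h sa) :=
  rfl

lemma Qaux_meas_bdd (hpol : IsPolicy pol) (rw : ℕ → S × A → ℝ)
    (hrm : ∀ h, Measurable (rw h)) (hrb : ∀ h, ∃ c, ∀ sa, |rw h sa| ≤ c) :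
    ∀ n h, Measurable (Qaux M rw pol n h) ∧ ∃ c, ∀ sa, |Qaux M rw pol n h sa| ≤ c := by
  intro n
  induction n with
  | zero =>
      intro h
      refine ⟨?_, 0, fun sa => by simp [Qaux_zero]⟩
      rw [Qaux_zero]
      exact measurable_const
  | succ n ih =>
      intro h
      obtain ⟨hm, c, hc⟩ := ih (h + 1)
      obtain ⟨cr, hcr⟩ := hrb h
      have hg := measurable_kint_pair (hpol.2 (h + 1)) (hpol.1 (h + 1)) hm hc
      have hG := measurable_kint (M.P_meas h) (M.P_prob h) hg.1 hg.2
      constructor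
      · have : Qaux M rw pol (n + 1) h = fun sa =>
            rw h sa + ∫ s', (∫ a', Qaux M rw pol n (h + 1) (s', a') ∂(pol (h + 1) s'))
              ∂(M.P h sa) := rfl
        rw [this]
        exact (hrm h).add hG.1
      · refine ⟨cr + c, fun sa => ?_⟩
        rw [Qaux_succ]
        exact (abs_add_le _ _).trans (add_le_add (hcr sa) (hG.2 sa))

lemma stateLaw_prob (hpol : IsPolicy pol) :
    ∀ h, IsProbabilityMeasure (stateLaw M pol h)
  | 0 => by rw [stateLaw]; infer_instance
  | 1 => by rw [stateLaw]; infer_instance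
  | (n + 2) => by
      rw [stateLaw]
      haveI := stateLaw_prob hpol (n + 1)
      haveI := isProb_bind (μ := stateLaw M pol (n+1))
        (measurable_pairK (hpol.2 (n+1)) (hpol.1 (n+1))) (pairK_prob (hpol.1 (n+1)))
      exact isProb_bind (M.P_meas (n+1)) (M.P_prob (n+1))

lemma occLaw_prob (hpol : IsPolicy pol) (h : ℕ) :
    IsProbabilityMeasure (occLaw M pol h) := by
  haveI := stateLaw_prob M pol hpol h
  exact isProb_bind (measurable_pairK (hpol.2 h) (hpol.1 h)) (pairK_prob (hpol.1 h))

lemma integral_occLaw (hpol : IsPolicy pol) (h : ℕ) {F : S × A → ℝ}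
    (hF : Measurable F) {C : ℝ} (hC : ∀ p, |F p| ≤ C) :
    ∫ p, F p ∂(occLaw M pol h) = ∫ s, ∫ a, F (s, a) ∂(pol h s) ∂(stateLaw M pol h) := by
  haveI := stateLaw_prob M pol hpol h
  rw [occLaw, integral_bind' (measurable_pairK (hpol.2 h) (hpol.1 h))
    (pairK_prob (hpol.1 h)) hF hC]
  exact integral_congr_ae (ae_of_all _ fun s => integral_pairK hF s)

lemma stateLaw_succ_eq (n : ℕ) :
    stateLaw M pol (n + 2) = (occLaw M pol (n + 1)).bind (M.P (n + 1)) := rfl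

lemma occ_int_Qaux (hpol : IsPolicy pol) (rw : ℕ → S × A → ℝ)
    (hrm : ∀ h, Measurable (rw h)) (hrb : ∀ h, ∃ c, ∀ sa, |rw h sa| ≤ c) :
    ∀ n h, 1 ≤ h →
      ∫ sa, Qaux M rw pol n h sa ∂(occLaw M pol h) =
        ∑ k ∈ Finset.range n, ∫ sa, rw (h + k) sa ∂(occLaw M pol (h + k)) := by
  intro n
  induction n with
  | zero => intro h _; simp [Qaux_zero]
  | succ n ih =>
      intro h hh
      haveI := occLaw_prob M pol hpol h
      haveI := occLaw_prob M pol hpol (h + 1)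
      haveI := stateLaw_prob M pol hpol (h + 1)
      obtain ⟨hm, c, hc⟩ := Qaux_meas_bdd M pol hpol rw hrm hrb n (h + 1)
      obtain ⟨cr, hcr⟩ := hrb h
      have hg := measurable_kint_pair (hpol.2 (h + 1)) (hpol.1 (h + 1)) hm hc
      have hG := measurable_kint (M.P_meas h) (M.P_prob h) hg.1 hg.2
      -- step 1: split the integral
      have step1 : ∫ sa, Qaux M rw pol (n + 1) h sa ∂(occLaw M pol h)
          = (∫ sa, rw h sa ∂(occLaw M pol h)) +
            ∫ sa, (∫ s', (∫ a', Qaux M rw pol n (h + 1) (s', a') ∂(pol (h + 1) s'))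
              ∂(M.P h sa)) ∂(occLaw M pol h) := by
        have : ∀ sa, Qaux M rw pol (n + 1) h sa =
            rw h sa + ∫ s', (∫ a', Qaux M rw pol n (h + 1) (s', a') ∂(pol (h + 1) s'))
              ∂(M.P h sa) := fun sa => Qaux_succ M pol rw n h sa
        rw [integral_congr_ae (ae_of_all _ this)]
        exact integral_add (bdd_integrable (hrm h) hcr) (bdd_integrable hG.1 hG.2)
      -- step 2: the second term is the integral over the next occupancy
      have hstate : stateLaw M pol (h + 1) = (occLaw M pol h).bind (M.P h) := by
        obtain ⟨m, rfl⟩ := Nat.exists_eq_add_of_le hh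
        rw [Nat.add_comm 1 m]
        exact stateLaw_succ_eq M pol m
      have step2 : ∫ sa, (∫ s', (∫ a', Qaux M rw pol n (h + 1) (s', a') ∂(pol (h + 1) s'))
            ∂(M.P h sa)) ∂(occLaw M pol h)
          = ∫ sa, Qaux M rw pol n (h + 1) sa ∂(occLaw M pol (h + 1)) := by
        rw [integral_occLaw M pol hpol (h + 1) hm hc, hstate,
          integral_bind' (M.P_meas h) (M.P_prob h) hg.1 hg.2]
      rw [step1, step2, ih (h + 1) (le_trans hh (Nat.le_succ h)),
        Finset.sum_range_succ']
      simp only [Nat.add_zero]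
      rw [add_comm]
      congr 1
      refine Finset.sum_congr rfl fun k _ => ?_
      rw [show h + 1 + k = h + (k + 1) by omega]
end mdp

section main
variable {S A : Type*} [MeasurableSpace S] [MeasurableSpace A]
variable (M : EpisodicMDP S A)

lemma Qaux_induced (polT : PolicyKer S A) (Q : ℕ → S × A → ℝ)
    (hQtop : Q (M.H + 1) = fun _ => 0) :
    ∀ n, n ≤ M.H + 1 →
      Qaux M (inducedReward M polT Q) polT n (M.H + 1 - n) = Q (M.H + 1 - n) := by
  intro n
  induction n with
  | zero => intro _; funext sa; simp [Qaux_zero, hQtop]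
  | succ n ih =>
      intro hn
      have hn' : n ≤ M.H + 1 := le_trans (Nat.le_succ n) hn
      have hidx : M.H + 1 - (n + 1) + 1 = M.H + 1 - n := by omega
      funext sa
      rw [Qaux_succ, hidx, ih hn']
      simp only [inducedReward, bellmanErr, bellmanOp]
      rw [hidx]
      ring

lemma Vval_one (rw : ℕ → S × A → ℝ) (pol : PolicyKer S A) :
    Vval M rw pol 1 M.s1 = ∫ a, Qaux M rw pol M.H 1 (M.s1, a) ∂(pol 1 M.s1) := by
  rw [Vval, Qval, Nat.add_sub_cancel]

lemma occLaw_one (pol : PolicyKer S A) (hpol : IsPolicy pol) :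
    occLaw M pol 1 = (pol 1 M.s1).map (fun a => ((M.s1, a) : S × A)) := by
  rw [occLaw]
  show (Measure.dirac M.s1).bind _ = _
  exact Measure.dirac_bind (measurable_pairK (hpol.2 1) (hpol.1 1)) M.s1

lemma Vval_eq_sum (rw : ℕ → S × A → ℝ) (pol : PolicyKer S A) (hpol : IsPolicy pol)
    (hrm : ∀ h, Measurable (rw h)) (hrb : ∀ h, ∃ c, ∀ sa, |rw h sa| ≤ c) :
    Vval M rw pol 1 M.s1 =
      ∑ k ∈ Finset.range M.H, ∫ sa, rw (1 + k) sa ∂(occLaw M pol (1 + k)) := by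
  obtain ⟨hm, c, hc⟩ := Qaux_meas_bdd M pol hpol rw hrm hrb M.H 1
  rw [Vval_one, ← integral_pairK hm M.s1, ← occLaw_one M pol hpol,
    occ_int_Qaux M pol hpol rw hrm hrb M.H 1 le_rfl]
end main

/-- **Error decomposition.**  For any bounded measurable tuple `Q` (with `Q_{H+1} ≡ 0`) and
any policies `polC` (comparator `π`) and `polT` (learned `π̃`),
`SubOpt_π^M(π̃) = Σ_{h=1}^H E_π[E_h^{π̃}(Q_h, Q_{h+1})(s_h,a_h)] + Q_1(s₁, π̃_1) − V_1^{π̃}(s₁)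
 + SubOpt_π^{M(Q, π̃)}(π̃)`. -/
theorem error_decomposition
    (M : EpisodicMDP S A) (b : ℝ) (hr : ∀ h sa, |M.r h sa| ≤ b)
    (polC polT : PolicyKer S A) (hC : IsPolicy polC) (hT : IsPolicy polT)
    (Q : ℕ → S × A → ℝ) (hQmeas : ∀ h, Measurable (Q h))
    (hQbdd : ∀ h, ∃ c : ℝ, ∀ sa, |Q h sa| ≤ c)
    (hQtop : Q (M.H + 1) = fun _ => 0) :
    subOpt M M.r polC polT =
      (∑ h ∈ Finset.Icc 1 M.H,
          ∫ sa, bellmanErr M polT h (Q h) (Q (h + 1)) sa ∂(occLaw M polC h))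
        + (∫ a, Q 1 (M.s1, a) ∂(polT 1 M.s1)) - Vval M M.r polT 1 M.s1
        + subOpt M (inducedReward M polT Q) polC polT := by
  set rw' := inducedReward M polT Q with hrw'
  -- the "next-step" integral term in the Bellman operator, with its bounds
  have hX : ∀ h, ∃ c : ℝ,
      Measurable (fun sa => ∫ s', (∫ a', Q (h + 1) (s', a') ∂(polT (h + 1) s'))
        ∂(M.P h sa)) ∧
      ∀ sa, |∫ s', (∫ a', Q (h + 1) (s', a') ∂(polT (h + 1) s')) ∂(M.P h sa)| ≤ c := by
    intro h
    obtain ⟨c', hc'⟩ := hQbdd (h + 1)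
    have hg := measurable_kint_pair (hT.2 (h + 1)) (hT.1 (h + 1)) (hQmeas (h + 1)) hc'
    have hG := measurable_kint (M.P_meas h) (M.P_prob h) hg.1 hg.2
    exact ⟨c', hG.1, hG.2⟩
  have herrm : ∀ h, Measurable (bellmanErr M polT h (Q h) (Q (h + 1))) := by
    intro h
    obtain ⟨c', hGm, hGb⟩ := hX h
    exact ((M.r_meas h).add hGm).sub (hQmeas h)
  have herrb : ∀ h, ∃ c, ∀ sa, |bellmanErr M polT h (Q h) (Q (h + 1)) sa| ≤ c := by
    intro h
    obtain ⟨c', hGm, hGb⟩ := hX h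
    obtain ⟨c, hc⟩ := hQbdd h
    refine ⟨b + c' + c, fun sa => ?_⟩
    have : bellmanErr M polT h (Q h) (Q (h + 1)) sa =
        M.r h sa + (∫ s', (∫ a', Q (h + 1) (s', a') ∂(polT (h + 1) s')) ∂(M.P h sa))
          - Q h sa := rfl
    rw [this]
    have h1 := abs_sub (M.r h sa + (∫ s', (∫ a', Q (h + 1) (s', a') ∂(polT (h + 1) s'))
      ∂(M.P h sa))) (Q h sa)
    have h2 := abs_add_le (M.r h sa) (∫ s', (∫ a', Q (h + 1) (s', a') ∂(polT (h + 1) s'))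
      ∂(M.P h sa))
    have := hr h sa; have := hGb sa; have := hc sa
    linarith
  have hr'm : ∀ h, Measurable (rw' h) := fun h => (M.r_meas h).sub (herrm h)
  have hr'b : ∀ h, ∃ c, ∀ sa, |rw' h sa| ≤ c := by
    intro h
    obtain ⟨c, hc⟩ := herrb h
    refine ⟨b + c, fun sa => ?_⟩
    have : rw' h sa = M.r h sa - bellmanErr M polT h (Q h) (Q (h + 1)) sa := rfl
    rw [this]
    have h1 := abs_sub (M.r h sa) (bellmanErr M polT h (Q h) (Q (h + 1)) sa)
    have := hr h sa; have := hc sa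
    linarith
  -- the value of polT in the induced MDP is the integral of Q 1
  have hVt' : Vval M rw' polT 1 M.s1 = ∫ a, Q 1 (M.s1, a) ∂(polT 1 M.s1) := by
    rw [Vval_one]
    have h1 := Qaux_induced M polT Q hQtop M.H (Nat.le_succ _)
    rw [show M.H + 1 - M.H = 1 by omega] at h1
    rw [h1]
  have hrbM : ∀ h, ∃ c, ∀ sa, |M.r h sa| ≤ c := fun h => ⟨b, hr h⟩
  have hVcr := Vval_eq_sum M M.r polC hC M.r_meas hrbM
  have hVcr' := Vval_eq_sum M rw' polC hC hr'm hr'b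
  have hsum : (∑ h ∈ Finset.Icc 1 M.H,
        ∫ sa, bellmanErr M polT h (Q h) (Q (h + 1)) sa ∂(occLaw M polC h))
      = (∑ k ∈ Finset.range M.H, ∫ sa, M.r (1 + k) sa ∂(occLaw M polC (1 + k)))
        - ∑ k ∈ Finset.range M.H, ∫ sa, rw' (1 + k) sa ∂(occLaw M polC (1 + k)) := by
    rw [← Finset.sum_sub_distrib, ← Finset.Ico_add_one_right_eq_Icc, Finset.sum_Ico_eq_sum_range]
    refine Finset.sum_congr rfl fun k _ => ?_
    haveI := occLaw_prob M polC hC (1 + k)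
    obtain ⟨c, hc⟩ := herrb (1 + k)
    obtain ⟨c', hc'⟩ := hr'b (1 + k)
    rw [← integral_sub (bdd_integrable (M.r_meas _) (hr _)) (bdd_integrable (hr'm _) hc')]
    refine integral_congr_ae (ae_of_all _ fun sa => ?_)
    show bellmanErr M polT (1 + k) (Q (1 + k)) (Q (1 + k + 1)) sa
      = M.r (1 + k) sa - (M.r (1 + k) sa - bellmanErr M polT (1 + k) (Q (1 + k)) (Q (1 + k + 1)) sa)
    ring
  rw [subOpt, subOpt, hsum, hVcr, hVcr', hVt']
  ring
end

section
/- Regret of multiplicative weights over induced MDPs: Let A be a finite action set with |A| ≥ 2 and let {Q^t}_{t=1}^T be an arbitrary sequence of tuples Q^t = {Q^t_h : S × A → ℝ}_{h=1}^H with max_{h,t} ‖Q^t_h‖_∞ ≤ b. Define the policies π^1_h(·|s) uniform on A and π^{t+1}_h(a|s) ∝ π^t_h(a|s) exp(η Q^t_h(s,a)) for all s, a, h, t. If η = sqrt(ln|A| / (4(e−2) b² T)) and T ≥ ln|A|/(e−2), then for every policy π: Σ_{t=1}^T ( V^π_{1, M(Q^t, π^t)}(s₁) − V^{π^t}_{1,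 M(Q^t, π^t)}(s₁) ) ≤ 4 H b sqrt(T ln|A|). -/
open MeasureTheory
open scoped ENNReal

variable {S A : Type*} [MeasurableSpace S] [MeasurableSpace A]

section FiniteActions

variable [Fintype A]

/-- Backward-recursion helper for value functions with a finite action set and a policy given
by probability weights `p h s a`. -/
noncomputable def QfinAux (M : EpisodicMDP S A) (rw : ℕ → S × A → ℝ)
    (p : ℕ → S → A → ℝ) : ℕ → ℕ → S × A → ℝ
  | 0, _, _ => 0
  | n + 1, h, sa =>
      rw h sa +
        ∫ s', (∑ a' : A, p (h + 1) s' a' * QfinAux M rw p n (h + 1) (s', a')) ∂(M.P h sa)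

/-- Action-value function `Q^{p}_h` (transitions of `M`, rewards `rw`, finite actions). -/
noncomputable def Qfin (M : EpisodicMDP S A) (rw : ℕ → S × A → ℝ) (p : ℕ → S → A → ℝ)
    (h : ℕ) : S × A → ℝ :=
  QfinAux M rw p (M.H + 1 - h) h

/-- Value function `V^{p}_h` (finite actions). -/
noncomputable def Vfin (M : EpisodicMDP S A) (rw : ℕ → S × A → ℝ) (p : ℕ → S → A → ℝ)
    (h : ℕ) (s : S) : ℝ :=
  ∑ a : A, p h s a * Qfin M rw p h (s, a)

/-- Bellman operator (finite actions). -/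
noncomputable def bellmanOpFin (M : EpisodicMDP S A) (p : ℕ → S → A → ℝ) (h : ℕ)
    (f : S × A → ℝ) : S × A → ℝ :=
  fun sa => M.r h sa + ∫ s', (∑ a' : A, p (h + 1) s' a' * f (s', a')) ∂(M.P h sa)

/-- Bellman error `E_h^{p}(f_h, f_{h+1}) = T_h^{p} f_{h+1} − f_h` (finite actions). -/
noncomputable def bellmanErrFin (M : EpisodicMDP S A) (p : ℕ → S → A → ℝ) (h : ℕ)
    (fh fnext : S × A → ℝ) : S × A → ℝ :=
  fun sa => bellmanOpFin M p h fnext sa - fh sa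

/-- Reward of the induced MDP `M(Q, p)` (finite actions). -/
noncomputable def inducedRewardFin (M : EpisodicMDP S A) (p : ℕ → S → A → ℝ)
    (Q : ℕ → S × A → ℝ) : ℕ → S × A → ℝ :=
  fun h sa => M.r h sa - bellmanErrFin M p h (Q h) (Q (h + 1)) sa

/-- Multiplicative-weights iterates: `mwAux Qs η (t-1) = π^t`, i.e. `π^1` is uniform and
`π^{t+1}_h(a|s) ∝ π^t_h(a|s) exp(η Q^t_h(s,a))`. -/
noncomputable def mwAux (Qs : ℕ → ℕ → S × A → ℝ) (η : ℝ) : ℕ → ℕ → S → A → ℝ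
  | 0, _, _, _ => (Fintype.card A : ℝ)⁻¹
  | n + 1, h, s, a =>
      mwAux Qs η n h s a * Real.exp (η * Qs (n + 1) h (s, a)) /
        ∑ a' : A, mwAux Qs η n h s a' * Real.exp (η * Qs (n + 1) h (s, a'))

/-- The `t`-th multiplicative-weights policy `π^t` (for `t ≥ 1`). -/
noncomputable def mwPol (Qs : ℕ → ℕ → S × A → ℝ) (η : ℝ) (t : ℕ) : ℕ → S → A → ℝ :=
  mwAux Qs η (t - 1)


section MWHelpers

lemma mw_exp_quad {y : ℝ} (hy : |y| ≤ 1) : Real.exp y ≤ 1 + y + (3/4) * y ^ 2 := by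
  have h := Real.exp_bound hy (n := 2) (by norm_num)
  have h2 : ∑ m ∈ Finset.range 2, y ^ m / m.factorial = 1 + y := by
    simp [Finset.sum_range_succ]
  rw [h2] at h
  have h3 := (abs_sub_le_iff.1 h).1
  have h4 : |y| ^ 2 = y ^ 2 := sq_abs y
  rw [h4] at h3
  norm_num [Nat.factorial] at h3
  linarith

lemma telescope_sum (Φ : ℕ → ℝ) (T : ℕ) :
    ∑ t ∈ Finset.Icc 1 T, (Φ t - Φ (t-1)) = Φ T - Φ 0 := by
  induction T with
  | zero => simp
  | succ n ih =>
    rw [Finset.sum_Icc_succ_top (by omega), ih]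
    simp

lemma mw_regret {α : Type*} [Fintype α] (hA : 2 ≤ Fintype.card α)
    (b η : ℝ) (hη : 0 < η) (hηb : η * b ≤ 1) (T : ℕ)
    (x : ℕ → α → ℝ) (hx : ∀ t ∈ Finset.Icc 1 T, ∀ a, |x t a| ≤ b)
    (w : ℕ → α → ℝ) (hw0 : ∀ a, w 0 a = (Fintype.card α : ℝ)⁻¹)
    (hwrec : ∀ n a, w (n+1) a =
      w n a * Real.exp (η * x (n+1) a) / ∑ a' : α, w n a' * Real.exp (η * x (n+1) a'))
    (p : α → ℝ) (hp0 : ∀ a, 0 ≤ p a) (hp1 : ∑ a : α, p a = 1) :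
    ∑ t ∈ Finset.Icc 1 T, ∑ a : α, (p a - w (t-1) a) * x t a
      ≤ Real.log (Fintype.card α) / η + 3/4 * η * T * b^2 := by
  have hcard : 0 < Fintype.card α := by omega
  haveI hne : Nonempty α := Fintype.card_pos_iff.mp hcard
  have wpos : ∀ n a, 0 < w n a := by
    intro n
    induction n with
    | zero => intro a; rw [hw0]; exact inv_pos.mpr (by exact_mod_cast hcard)
    | succ n ih =>
      intro a
      rw [hwrec]
      exact div_pos (mul_pos (ih a) (Real.exp_pos _))
        (Finset.sum_pos (fun a' _ => mul_pos (ih a') (Real.exp_pos _)) Finset.univ_nonempty)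
  have wsum : ∀ n, ∑ a : α, w n a = 1 := by
    intro n
    cases n with
    | zero =>
      simp only [hw0]
      rw [Finset.sum_const, Finset.card_univ, nsmul_eq_mul,
        mul_inv_cancel₀ (by exact_mod_cast hcard.ne')]
    | succ n =>
      have hZ : 0 < ∑ a' : α, w n a' * Real.exp (η * x (n+1) a') :=
        Finset.sum_pos (fun a' _ => mul_pos (wpos n a') (Real.exp_pos _)) Finset.univ_nonempty
      simp only [hwrec]
      rw [← Finset.sum_div, div_self hZ.ne']
  have wle1 : ∀ n a, w n a ≤ 1 := by
    intro n a
    calc w n a ≤ ∑ a' : α, w n a' :=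
          Finset.single_le_sum (fun a' _ => (wpos n a').le) (Finset.mem_univ a)
      _ = 1 := wsum n
  set Φ : ℕ → ℝ := fun n => ∑ a : α, p a * Real.log (w n a) with hΦdef
  have step : ∀ t ∈ Finset.Icc 1 T,
      η * ∑ a : α, (p a - w (t-1) a) * x t a
        ≤ (Φ t - Φ (t-1)) + 3/4 * η^2 * b^2 := by
    intro t ht
    obtain ⟨ht1, ht2⟩ := Finset.mem_Icc.mp ht
    obtain ⟨n, rfl⟩ : ∃ n, t = n + 1 := ⟨t - 1, by omega⟩
    have hsimp : n + 1 - 1 = n := by omega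
    rw [hsimp]
    set Z : ℝ := ∑ a' : α, w n a' * Real.exp (η * x (n+1) a') with hZdef
    have hZ : 0 < Z :=
      Finset.sum_pos (fun a' _ => mul_pos (wpos n a') (Real.exp_pos _)) Finset.univ_nonempty
    have hlogw : ∀ a, Real.log (w (n+1) a)
        = Real.log (w n a) + η * x (n+1) a - Real.log Z := by
      intro a
      rw [hwrec, ← hZdef, Real.log_div (mul_pos (wpos n a) (Real.exp_pos _)).ne' hZ.ne',
        Real.log_mul (wpos n a).ne' (Real.exp_ne_zero _), Real.log_exp]
    have hΦs : Φ (n+1) - Φ n = η * (∑ a : α, p a * x (n+1) a) - Real.log Z := by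
      rw [hΦdef]
      simp only
      rw [← Finset.sum_sub_distrib]
      have : ∀ a ∈ Finset.univ, p a * Real.log (w (n+1) a) - p a * Real.log (w n a)
          = p a * (η * x (n+1) a) - p a * Real.log Z := by
        intro a _; rw [hlogw a]; ring
      rw [Finset.sum_congr rfl this, Finset.sum_sub_distrib, ← Finset.sum_mul, hp1]
      rw [Finset.mul_sum]
      have : ∀ a ∈ Finset.univ, p a * (η * x (n+1) a) = η * (p a * x (n+1) a) := by
        intro a _; ring
      rw [Finset.sum_congr rfl this, ← Finset.mul_sum]
      ring
    have hx' : ∀ a, |x (n+1) a| ≤ b := hx (n+1) (Finset.mem_Icc.mpr ⟨by omega, by omega⟩)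
    have hZle : Z ≤ 1 + η * (∑ a : α, w n a * x (n+1) a) + 3/4 * η^2 * b^2 := by
      have hb1 : ∀ a : α, w n a * Real.exp (η * x (n+1) a)
          ≤ w n a * (1 + η * x (n+1) a) + 3/4 * η^2 * b^2 * w n a := by
        intro a
        have habs : |η * x (n+1) a| ≤ 1 := by
          rw [abs_mul, abs_of_pos hη]
          calc η * |x (n+1) a| ≤ η * b := by
                exact mul_le_mul_of_nonneg_left (hx' a) hη.le
            _ ≤ 1 := hηb
        have hexp := mw_exp_quad habs
        have hx2 : (x (n+1) a)^2 ≤ b^2 := by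
          rw [← sq_abs]
          exact pow_le_pow_left₀ (abs_nonneg _) (hx' a) 2
        nlinarith [mul_le_mul_of_nonneg_left hexp (wpos n a).le,
          mul_le_mul_of_nonneg_left hx2 (mul_nonneg (sq_nonneg η) (wpos n a).le)]
      calc Z ≤ ∑ a : α, (w n a * (1 + η * x (n+1) a) + 3/4 * η^2 * b^2 * w n a) :=
            Finset.sum_le_sum (fun a _ => hb1 a)
        _ = 1 + η * (∑ a : α, w n a * x (n+1) a) + 3/4 * η^2 * b^2 := by
            rw [Finset.sum_add_distrib, ← Finset.mul_sum, wsum]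
            have : ∀ a ∈ Finset.univ, w n a * (1 + η * x (n+1) a)
                = w n a + η * (w n a * x (n+1) a) := by intro a _; ring
            rw [Finset.sum_congr rfl this, Finset.sum_add_distrib, ← Finset.mul_sum, wsum]
            ring
    have hlogZ : Real.log Z ≤ η * (∑ a : α, w n a * x (n+1) a) + 3/4 * η^2 * b^2 :=
      (Real.log_le_sub_one_of_pos hZ).trans (by linarith)
    have hexpand : ∑ a : α, (p a - w n a) * x (n+1) a
        = (∑ a : α, p a * x (n+1) a) - ∑ a : α, w n a * x (n+1) a := by
      rw [← Finset.sum_sub_distrib]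
      exact Finset.sum_congr rfl (fun a _ => by ring)
    rw [hexpand, mul_sub]
    linarith
  have hsum : η * ∑ t ∈ Finset.Icc 1 T, ∑ a : α, (p a - w (t-1) a) * x t a
      ≤ (Φ T - Φ 0) + T * (3/4 * η^2 * b^2) := by
    rw [Finset.mul_sum]
    calc ∑ t ∈ Finset.Icc 1 T, η * ∑ a : α, (p a - w (t-1) a) * x t a
        ≤ ∑ t ∈ Finset.Icc 1 T, ((Φ t - Φ (t-1)) + 3/4 * η^2 * b^2) :=
          Finset.sum_le_sum step
      _ = (Φ T - Φ 0) + T * (3/4 * η^2 * b^2) := by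
          rw [Finset.sum_add_distrib, telescope_sum, Finset.sum_const, Nat.card_Icc,
            nsmul_eq_mul]
          norm_num
  have hΦT : Φ T ≤ 0 :=
    Finset.sum_nonpos (fun a _ =>
      mul_nonpos_of_nonneg_of_nonpos (hp0 a) (Real.log_nonpos (wpos T a).le (wle1 T a)))
  have hΦ0 : Φ 0 = -Real.log (Fintype.card α) := by
    rw [hΦdef]
    simp only [hw0, Real.log_inv]
    rw [← Finset.sum_mul, hp1, one_mul]
  have hfin : η * ∑ t ∈ Finset.Icc 1 T, ∑ a : α, (p a - w (t-1) a) * x t a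
      ≤ Real.log (Fintype.card α) + T * (3/4 * η^2 * b^2) := by
    rw [hΦ0] at hsum; linarith
  have hdiv : (Real.log (Fintype.card α) + T * (3/4 * η^2 * b^2)) / η
      = Real.log (Fintype.card α) / η + 3/4 * η * T * b^2 := by
    field_simp
  rw [← hdiv, le_div_iff₀ hη]
  linarith [mul_comm (∑ t ∈ Finset.Icc 1 T, ∑ a : α, (p a - w (t-1) a) * x t a) η]

end MWHelpers

section MDPHelpers

lemma weighted_abs_le {p f : A → ℝ} (hp0 : ∀ a, 0 ≤ p a) (hp1 : ∑ a : A, p a = 1)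
    {C : ℝ} (hf : ∀ a, |f a| ≤ C) : |∑ a : A, p a * f a| ≤ C := by
  calc |∑ a : A, p a * f a| ≤ ∑ a : A, |p a * f a| := Finset.abs_sum_le_sum_abs _ _
    _ ≤ ∑ a : A, p a * C := by
        refine Finset.sum_le_sum (fun a _ => ?_)
        rw [abs_mul, abs_of_nonneg (hp0 a)]
        exact mul_le_mul_of_nonneg_left (hf a) (hp0 a)
    _ = C := by rw [← Finset.sum_mul, hp1, one_mul]

lemma meas_integral_P (M : EpisodicMDP S A) (h : ℕ) {φ : S → ℝ} (hφ : Measurable φ) :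
    Measurable fun sa : S × A => ∫ s', φ s' ∂(M.P h sa) := by
  let κ : ProbabilityTheory.Kernel (S × A) S := ⟨M.P h, M.P_meas h⟩
  haveI : ProbabilityTheory.IsMarkovKernel κ := ⟨fun sa => M.P_prob h sa⟩
  have hm : Measurable fun sa : S × A => ∫ s', φ s' ∂(κ sa) :=
    (MeasureTheory.StronglyMeasurable.integral_kernel_prod_right'
      (κ := κ) (f := fun q : (S × A) × S => φ q.2)
      ((hφ.comp measurable_snd).stronglyMeasurable)).measurable
  exact hm

lemma integrable_of_abs_bound {μ : Measure S} [IsProbabilityMeasure μ] {φ : S → ℝ}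
    (hφ : Measurable φ) (C : ℝ) (hC : ∀ s, |φ s| ≤ C) : Integrable φ μ :=
  (integrable_const C).mono' hφ.aestronglyMeasurable
    (Filter.Eventually.of_forall fun s => by simpa [Real.norm_eq_abs] using hC s)

lemma mwAux_pos (hcard : 0 < Fintype.card A) (Qs : ℕ → ℕ → S × A → ℝ) (η : ℝ) :
    ∀ n h s a, 0 < mwAux Qs η n h s a := by
  intro n
  induction n with
  | zero =>
    intro h s a
    show (0:ℝ) < (Fintype.card A : ℝ)⁻¹
    exact inv_pos.mpr (by exact_mod_cast hcard)
  | succ n ih =>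
    intro h s a
    haveI : Nonempty A := Fintype.card_pos_iff.mp hcard
    exact div_pos (mul_pos (ih h s a) (Real.exp_pos _))
      (Finset.sum_pos (fun a' _ => mul_pos (ih h s a') (Real.exp_pos _)) Finset.univ_nonempty)

lemma mwAux_sum (hcard : 0 < Fintype.card A) (Qs : ℕ → ℕ → S × A → ℝ) (η : ℝ) :
    ∀ n h s, ∑ a : A, mwAux Qs η n h s a = 1 := by
  intro n h s
  haveI : Nonempty A := Fintype.card_pos_iff.mp hcard
  cases n with
  | zero =>
    show ∑ _a : A, (Fintype.card A : ℝ)⁻¹ = 1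
    rw [Finset.sum_const, Finset.card_univ, nsmul_eq_mul,
      mul_inv_cancel₀ (by exact_mod_cast hcard.ne')]
  | succ n =>
    have hZ : 0 < ∑ a' : A, mwAux Qs η n h s a' * Real.exp (η * Qs (n+1) h (s, a')) :=
      Finset.sum_pos (fun a' _ => mul_pos (mwAux_pos hcard Qs η n h s a') (Real.exp_pos _))
        Finset.univ_nonempty
    show ∑ a : A, mwAux Qs η n h s a * Real.exp (η * Qs (n+1) h (s, a)) /
        (∑ a' : A, mwAux Qs η n h s a' * Real.exp (η * Qs (n+1) h (s, a'))) = 1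
    rw [← Finset.sum_div, div_self hZ.ne']

lemma mwAux_meas (Qs : ℕ → ℕ → S × A → ℝ) (η : ℝ) (hQm : ∀ t h, Measurable (Qs t h)) :
    ∀ n h a, Measurable fun s => mwAux Qs η n h s a := by
  intro n
  induction n with
  | zero => intro h a; exact measurable_const
  | succ n ih =>
    intro h a
    have hQ : ∀ a' : A, Measurable fun s => Real.exp (η * Qs (n+1) h (s, a')) := fun a' =>
      Real.measurable_exp.comp (measurable_const.mul ((hQm (n+1) h).comp measurable_prodMk_right))
    exact ((ih h a).mul (hQ a)).div
      (Finset.measurable_sum _ (fun a' _ => (ih h a').mul (hQ a')))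

lemma qfin_eq_Q (M : EpisodicMDP S A) (Q : ℕ → S × A → ℝ) (p : ℕ → S → A → ℝ)
    (hQtop : Q (M.H + 1) = fun _ => 0) :
    ∀ n h, h + n = M.H + 1 → QfinAux M (inducedRewardFin M p Q) p n h = Q h := by
  intro n
  induction n with
  | zero =>
    intro h hh
    have : h = M.H + 1 := by omega
    subst this
    funext sa
    show (0:ℝ) = Q (M.H + 1) sa
    rw [hQtop]
  | succ n ih =>
    intro h hh
    funext sa
    show inducedRewardFin M p Q h sa +
        ∫ s', (∑ a' : A, p (h+1) s' a' * QfinAux M (inducedRewardFin M p Q) p n (h+1) (s', a'))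
          ∂(M.P h sa) = Q h sa
    rw [ih (h+1) (by omega)]
    simp only [inducedRewardFin, bellmanErrFin, bellmanOpFin]
    ring


/-- difference `Q^{pc}_{h,M(Q^t,q^t)} - Q^t_h` (with `n` remaining steps). -/
noncomputable def Gd (M : EpisodicMDP S A) (Qs : ℕ → ℕ → S × A → ℝ)
    (q : ℕ → ℕ → S → A → ℝ) (pc : ℕ → S → A → ℝ) (t n h : ℕ) : S × A → ℝ :=
  fun sa => QfinAux M (inducedRewardFin M (q t) (Qs t)) pc n h sa - Qs t h sa

noncomputable def Af (M : EpisodicMDP S A) (Qs : ℕ → ℕ → S × A → ℝ)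
    (q : ℕ → ℕ → S → A → ℝ) (pc : ℕ → S → A → ℝ) (t n h : ℕ) : S → ℝ :=
  fun s' => ∑ a' : A, pc h s' a' * QfinAux M (inducedRewardFin M (q t) (Qs t)) pc n h (s', a')

noncomputable def Bf (Qs : ℕ → ℕ → S × A → ℝ) (q : ℕ → ℕ → S → A → ℝ) (t h : ℕ) : S → ℝ :=
  fun s' => ∑ a' : A, q t h s' a' * Qs t h (s', a')

lemma key_induction (M : EpisodicMDP S A)
    (b : ℝ) (hb : 0 < b) (T : ℕ) (Qs : ℕ → ℕ → S × A → ℝ)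
    (hQm : ∀ t h, Measurable (Qs t h))
    (hQtop : ∀ t, Qs t (M.H + 1) = fun _ => 0)
    (habsQ : ∀ t ∈ Finset.Icc 1 T, ∀ h', 1 ≤ h' → h' ≤ M.H + 1 → ∀ sa : S × A, |Qs t h' sa| ≤ b)
    (q : ℕ → ℕ → S → A → ℝ)
    (hq0 : ∀ t h s a, 0 ≤ q t h s a) (hq1 : ∀ t h s, ∑ a : A, q t h s a = 1)
    (hqm : ∀ t h a, Measurable fun s => q t h s a)
    (pc : ℕ → S → A → ℝ)
    (hpc0 : ∀ h s a, 0 ≤ pc h s a) (hpc1 : ∀ h s, ∑ a : A, pc h s a = 1)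
    (hpcm : ∀ h a, Measurable fun s => pc h s a)
    (R : ℝ)
    (hreg : ∀ h', 1 ≤ h' → h' ≤ M.H + 1 → ∀ s,
      ∑ t ∈ Finset.Icc 1 T, ∑ a : A, (pc h' s a - q t h' s a) * Qs t h' (s, a) ≤ R) :
    ∀ n h, 1 ≤ h → h + n = M.H + 1 →
      (∀ t ∈ Finset.Icc 1 T, Measurable (Gd M Qs q pc t n h)) ∧
      (∀ t ∈ Finset.Icc 1 T, ∀ sa, |Gd M Qs q pc t n h sa| ≤ 2 * b * n) ∧
      (∀ sa, ∑ t ∈ Finset.Icc 1 T, Gd M Qs q pc t n h sa ≤ ((n - 1 : ℕ) : ℝ) * R) := by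
  intro n
  induction n with
  | zero =>
    intro h _ hh
    have hh' : h = M.H + 1 := by omega
    subst hh'
    have hz : ∀ t sa, Gd M Qs q pc t 0 (M.H + 1) sa = 0 := by
      intro t sa
      show (0:ℝ) - Qs t (M.H + 1) sa = 0
      rw [hQtop t]
      simp
    refine ⟨fun t _ => ?_, fun t _ sa => ?_, fun sa => ?_⟩
    · have : Gd M Qs q pc t 0 (M.H + 1) = fun _ => (0:ℝ) := funext (hz t)
      rw [this]; exact measurable_const
    · rw [hz t sa]; norm_num
    · simp only [hz]; simp
  | succ n ih =>
    intro h h1 hh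
    obtain ⟨ihm, ihb, ihr⟩ := ih (h + 1) (by omega) (by omega)
    have hQnext_abs : ∀ t ∈ Finset.Icc 1 T, ∀ sa : S × A, |Qs t (h+1) sa| ≤ b :=
      fun t ht sa => habsQ t ht (h+1) (by omega) (by omega) sa
    have hQfin_meas : ∀ t ∈ Finset.Icc 1 T, Measurable fun sa =>
        QfinAux M (inducedRewardFin M (q t) (Qs t)) pc n (h+1) sa := by
      intro t ht
      have e : (fun sa => QfinAux M (inducedRewardFin M (q t) (Qs t)) pc n (h+1) sa)
          = fun sa => Gd M Qs q pc t n (h+1) sa + Qs t (h+1) sa := by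
        funext sa; simp only [Gd]; ring
      rw [e]; exact (ihm t ht).add (hQm t (h+1))
    have hAmeas : ∀ t ∈ Finset.Icc 1 T, Measurable (Af M Qs q pc t n (h+1)) := by
      intro t ht
      exact Finset.measurable_sum _ (fun a' _ => (hpcm (h+1) a').mul
        ((hQfin_meas t ht).comp measurable_prodMk_right))
    have hBmeas : ∀ t, Measurable (Bf Qs q t (h+1)) := by
      intro t
      exact Finset.measurable_sum _ (fun a' _ => (hqm t (h+1) a').mul
        ((hQm t (h+1)).comp measurable_prodMk_right))
    have hAbd : ∀ t ∈ Finset.Icc 1 T, ∀ s', |Af M Qs q pc t n (h+1) s'| ≤ b * (2*n+1) := by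
      intro t ht s'
      refine weighted_abs_le (hpc0 (h+1) s') (hpc1 (h+1) s') (fun a => ?_)
      have hG := ihb t ht (s', a)
      have hQ := hQnext_abs t ht (s', a)
      have e : QfinAux M (inducedRewardFin M (q t) (Qs t)) pc n (h+1) (s', a)
          = Gd M Qs q pc t n (h+1) (s', a) + Qs t (h+1) (s', a) := by
        simp only [Gd]; ring
      rw [e]
      calc |Gd M Qs q pc t n (h+1) (s', a) + Qs t (h+1) (s', a)|
          ≤ |Gd M Qs q pc t n (h+1) (s', a)| + |Qs t (h+1) (s', a)| := abs_add_le _ _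
        _ ≤ b * (2*n+1) := by push_cast; linarith
    have hBbd : ∀ t ∈ Finset.Icc 1 T, ∀ s', |Bf Qs q t (h+1) s'| ≤ b := by
      intro t ht s'
      exact weighted_abs_le (hq0 t (h+1) s') (hq1 t (h+1) s') (fun a => hQnext_abs t ht (s', a))
    have hAint : ∀ t ∈ Finset.Icc 1 T, ∀ sa : S × A,
        Integrable (Af M Qs q pc t n (h+1)) (M.P h sa) := by
      intro t ht sa
      haveI := M.P_prob h sa
      exact integrable_of_abs_bound (hAmeas t ht) _ (hAbd t ht)
    have hBint : ∀ t ∈ Finset.Icc 1 T, ∀ sa : S × A,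
        Integrable (Bf Qs q t (h+1)) (M.P h sa) := by
      intro t ht sa
      haveI := M.P_prob h sa
      exact integrable_of_abs_bound (hBmeas t) _ (hBbd t ht)
    have ident : ∀ t ∈ Finset.Icc 1 T, ∀ sa, Gd M Qs q pc t (n+1) h sa
        = ∫ s', (Af M Qs q pc t n (h+1) s' - Bf Qs q t (h+1) s') ∂(M.P h sa) := by
      intro t ht sa
      haveI := M.P_prob h sa
      rw [integral_sub (hAint t ht sa) (hBint t ht sa)]
      show (inducedRewardFin M (q t) (Qs t) h sa
          + ∫ s', (∑ a' : A, pc (h+1) s' a'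
              * QfinAux M (inducedRewardFin M (q t) (Qs t)) pc n (h+1) (s', a')) ∂(M.P h sa))
          - Qs t h sa = _
      simp only [inducedRewardFin, bellmanErrFin, bellmanOpFin, Af, Bf]
      ring
    have hψint : ∀ t ∈ Finset.Icc 1 T, ∀ sa : S × A,
        Integrable (fun s' => Af M Qs q pc t n (h+1) s' - Bf Qs q t (h+1) s') (M.P h sa) :=
      fun t ht sa => (hAint t ht sa).sub (hBint t ht sa)
    refine ⟨fun t ht => ?_, fun t ht sa => ?_, fun sa => ?_⟩
    · have e : Gd M Qs q pc t (n+1) h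
          = fun sa => ∫ s', (Af M Qs q pc t n (h+1) s' - Bf Qs q t (h+1) s') ∂(M.P h sa) :=
        funext (ident t ht)
      rw [e]
      exact meas_integral_P M h ((hAmeas t ht).sub (hBmeas t))
    · rw [ident t ht sa]
      haveI := M.P_prob h sa
      have hbb : ∀ s', ‖Af M Qs q pc t n (h+1) s' - Bf Qs q t (h+1) s'‖ ≤ 2*b*(n+1) := by
        intro s'
        rw [Real.norm_eq_abs]
        calc |Af M Qs q pc t n (h+1) s' - Bf Qs q t (h+1) s'|
            ≤ |Af M Qs q pc t n (h+1) s'| + |Bf Qs q t (h+1) s'| := abs_sub _ _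
          _ ≤ 2*b*(n+1) := by
              have := hAbd t ht s'
              have := hBbd t ht s'
              push_cast
              linarith
      have hni := norm_integral_le_of_norm_le_const (μ := M.P h sa)
        (C := 2*b*(n+1)) (Filter.Eventually.of_forall hbb)
      rw [Real.norm_eq_abs] at hni
      simp only [measure_univ, ENNReal.toReal_one, probReal_univ, mul_one] at hni
      push_cast
      exact hni
    · haveI := M.P_prob h sa
      have hpt : ∀ s', ∑ t ∈ Finset.Icc 1 T,
          (Af M Qs q pc t n (h+1) s' - Bf Qs q t (h+1) s') ≤ (n : ℝ) * R := by
        intro s'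
        rcases Nat.eq_zero_or_pos n with rfl | hn
        · have hQ0 : ∀ t, Qs t (h+1) = fun _ => (0:ℝ) := by
            intro t
            have : h + 1 = M.H + 1 := by omega
            rw [this]; exact hQtop t
          have : ∀ t ∈ Finset.Icc 1 T,
              Af M Qs q pc t 0 (h+1) s' - Bf Qs q t (h+1) s' = 0 := by
            intro t _
            simp [Af, Bf, hQ0 t, QfinAux]
          rw [Finset.sum_congr rfl this]
          simp
        · have hsplit : ∀ t, Af M Qs q pc t n (h+1) s' - Bf Qs q t (h+1) s'
              = (∑ a : A, (pc (h+1) s' a - q t (h+1) s' a) * Qs t (h+1) (s', a))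
                + ∑ a : A, pc (h+1) s' a * Gd M Qs q pc t n (h+1) (s', a) := by
            intro t
            simp only [Af, Bf, Gd]
            rw [← Finset.sum_sub_distrib, ← Finset.sum_add_distrib]
            exact Finset.sum_congr rfl (fun a _ => by ring)
          rw [Finset.sum_congr rfl (fun t _ => hsplit t), Finset.sum_add_distrib]
          have hr1 : ∑ t ∈ Finset.Icc 1 T,
              ∑ a : A, (pc (h+1) s' a - q t (h+1) s' a) * Qs t (h+1) (s', a) ≤ R :=
            hreg (h+1) (by omega) (by omega) s'
          have hr2 : ∑ t ∈ Finset.Icc 1 T,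
              ∑ a : A, pc (h+1) s' a * Gd M Qs q pc t n (h+1) (s', a)
              ≤ ((n - 1 : ℕ) : ℝ) * R := by
            rw [Finset.sum_comm]
            calc ∑ a : A, ∑ t ∈ Finset.Icc 1 T, pc (h+1) s' a * Gd M Qs q pc t n (h+1) (s', a)
                = ∑ a : A, pc (h+1) s' a * ∑ t ∈ Finset.Icc 1 T, Gd M Qs q pc t n (h+1) (s', a) := by
                  exact Finset.sum_congr rfl (fun a _ => (Finset.mul_sum _ _ _).symm)
              _ ≤ ∑ a : A, pc (h+1) s' a * (((n - 1 : ℕ) : ℝ) * R) :=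
                  Finset.sum_le_sum (fun a _ =>
                    mul_le_mul_of_nonneg_left (ihr (s', a)) (hpc0 (h+1) s' a))
              _ = ((n - 1 : ℕ) : ℝ) * R := by rw [← Finset.sum_mul, hpc1, one_mul]
          have hcast : ((n - 1 : ℕ) : ℝ) = (n : ℝ) - 1 := by
            rw [Nat.cast_sub hn]; norm_num
          rw [hcast] at hr2
          have : (n:ℝ) * R = R + ((n:ℝ) - 1) * R := by ring
          rw [this]
          exact add_le_add hr1 hr2
      have hS : Integrable (fun s' => ∑ t ∈ Finset.Icc 1 T,
          (Af M Qs q pc t n (h+1) s' - Bf Qs q t (h+1) s')) (M.P h sa) :=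
        integrable_finset_sum _ (fun t ht => hψint t ht sa)
      calc ∑ t ∈ Finset.Icc 1 T, Gd M Qs q pc t (n+1) h sa
          = ∑ t ∈ Finset.Icc 1 T,
              ∫ s', (Af M Qs q pc t n (h+1) s' - Bf Qs q t (h+1) s') ∂(M.P h sa) :=
            Finset.sum_congr rfl (fun t ht => ident t ht sa)
        _ = ∫ s', (∑ t ∈ Finset.Icc 1 T,
              (Af M Qs q pc t n (h+1) s' - Bf Qs q t (h+1) s')) ∂(M.P h sa) :=
            (integral_finset_sum _ (fun t ht => hψint t ht sa)).symm
        _ ≤ ∫ _s', ((n:ℝ) * R) ∂(M.P h sa) :=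
            integral_mono hS (integrable_const _) hpt
        _ = (n:ℝ) * R := by simp [measure_univ]
        _ = ((n + 1 - 1 : ℕ) : ℝ) * R := by norm_num


end MDPHelpers

/-- **Regret of multiplicative weights over induced MDPs.**  For any sequence of value
tuples `{Q^t}` bounded by `b` (with `Q^t_{H+1} ≡ 0`), the multiplicative-weights policies
`π^1 = uniform`, `π^{t+1} ∝ π^t exp(η Q^t)` with
`η = sqrt(ln|A| / (4(e−2) b² T))` and `T ≥ ln|A|/(e−2)` satisfy, for every policy `π`,
`Σ_{t=1}^T (V^π_{1,M(Q^t,π^t)}(s₁) − V^{π^t}_{1,M(Q^t,π^t)}(s₁)) ≤ 4 H b sqrt(T ln|A|)`. -/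
theorem multiplicative_weights_regret
    (M : EpisodicMDP S A) (hA : 2 ≤ Fintype.card A)
    (b : ℝ) (hb : 0 < b) (T : ℕ)
    (Qs : ℕ → ℕ → S × A → ℝ)
    (hQb : ∀ t ∈ Finset.Icc 1 T, ∀ h ∈ Finset.Icc 1 M.H, ∀ sa, |Qs t h sa| ≤ b)
    (hQm : ∀ t h, Measurable (Qs t h))
    (hQtop : ∀ t, Qs t (M.H + 1) = fun _ => 0)
    (η : ℝ)
    (hη : η = Real.sqrt (Real.log (Fintype.card A) / (4 * (Real.exp 1 - 2) * b ^ 2 * T)))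
    (hT : Real.log (Fintype.card A) / (Real.exp 1 - 2) ≤ (T : ℝ))
    (pc : ℕ → S → A → ℝ)
    (hpc0 : ∀ h s a, 0 ≤ pc h s a) (hpc1 : ∀ h s, ∑ a : A, pc h s a = 1)
    (hpcm : ∀ h a, Measurable (fun s => pc h s a)) :
    ∑ t ∈ Finset.Icc 1 T,
        (Vfin M (inducedRewardFin M (mwPol Qs η t) (Qs t)) pc 1 M.s1
          - Vfin M (inducedRewardFin M (mwPol Qs η t) (Qs t)) (mwPol Qs η t) 1 M.s1)
      ≤ 4 * M.H * b * Real.sqrt (T * Real.log (Fintype.card A)) := by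

  classical
  have hcard : 0 < Fintype.card A := by omega
  set L := Real.log (Fintype.card A) with hLdef
  have hc01 : (0.71 : ℝ) < Real.exp 1 - 2 := by
    have := Real.exp_one_gt_d9; norm_num at this ⊢; linarith
  have hc02 : Real.exp 1 - 2 < 0.72 := by
    have := Real.exp_one_lt_d9; norm_num at this ⊢; linarith
  have hc0 : (0:ℝ) < Real.exp 1 - 2 := by linarith
  have hL0 : 0 < L := by
    refine Real.log_pos ?_
    have h2 : (2:ℝ) ≤ (Fintype.card A : ℝ) := by exact_mod_cast hA
    linarith
  have hT0 : (0:ℝ) < T := lt_of_lt_of_le (div_pos hL0 hc0) hT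
  have hLcT : L ≤ (Real.exp 1 - 2) * T := by
    rw [div_le_iff₀ hc0] at hT; linarith
  set sc := Real.sqrt (Real.exp 1 - 2) with hscdef
  set sT := Real.sqrt (T : ℝ) with hsTdef
  set sL := Real.sqrt L with hsLdef
  have hsc0 : 0 < sc := Real.sqrt_pos.mpr hc0
  have hsT0 : 0 < sT := Real.sqrt_pos.mpr hT0
  have hsL0 : 0 < sL := Real.sqrt_pos.mpr hL0
  have hsc2 : sc^2 = Real.exp 1 - 2 := Real.sq_sqrt hc0.le
  have hsT2 : sT^2 = (T:ℝ) := Real.sq_sqrt hT0.le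
  have hsL2 : sL^2 = L := Real.sq_sqrt hL0.le
  have hden : (0:ℝ) < 2*b*sc*sT := mul_pos (mul_pos (mul_pos two_pos hb) hsc0) hsT0
  have hηeq : η = sL / (2*b*sc*sT) := by
    rw [hη]
    rw [show 4*(Real.exp 1 - 2)*b^2*(T:ℝ) = (2*b*sc*sT)^2 by
      rw [mul_pow, mul_pow, mul_pow, hsc2, hsT2]; ring]
    rw [Real.sqrt_div hL0.le, Real.sqrt_sq hden.le]
  have hη0 : 0 < η := by rw [hηeq]; exact div_pos hsL0 hden
  have hsLle : sL ≤ sc * sT := by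
    rw [hsLdef, hscdef, hsTdef, ← Real.sqrt_mul hc0.le]
    exact Real.sqrt_le_sqrt hLcT
  have hηb1 : η * b ≤ 1 := by
    rw [hηeq, div_mul_eq_mul_div, div_le_one hden]
    nlinarith only [mul_le_mul_of_nonneg_right hsLle hb.le, mul_pos (mul_pos hb hsc0) hsT0]
  have habsQ : ∀ t ∈ Finset.Icc 1 T, ∀ h', 1 ≤ h' → h' ≤ M.H + 1 →
      ∀ sa : S × A, |Qs t h' sa| ≤ b := by
    intro t ht h' h1 h2 sa
    rcases eq_or_lt_of_le h2 with he | hlt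
    · rw [he, hQtop t]
      simpa using hb.le
    · exact hQb t ht h' (Finset.mem_Icc.mpr ⟨h1, by omega⟩) sa
  set R := L / η + 3/4 * η * T * b^2 with hRdef
  have hreg : ∀ h', 1 ≤ h' → h' ≤ M.H + 1 → ∀ s : S,
      ∑ t ∈ Finset.Icc 1 T, ∑ a : A,
        (pc h' s a - mwPol Qs η t h' s a) * Qs t h' (s, a) ≤ R := by
    intro h' h1 h2 s
    exact mw_regret hA b η hη0 hηb1 T (fun t a => Qs t h' (s, a))
      (fun t ht a => habsQ t ht h' h1 h2 (s, a))
      (fun n a => mwAux Qs η n h' s a) (fun a => rfl) (fun n a => rfl)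
      (pc h' s) (hpc0 h' s) (hpc1 h' s)
  rcases Nat.eq_zero_or_pos M.H with hH0 | hH1
  · have hzero : ∀ t ∈ Finset.Icc 1 T,
        Vfin M (inducedRewardFin M (mwPol Qs η t) (Qs t)) pc 1 M.s1
          - Vfin M (inducedRewardFin M (mwPol Qs η t) (Qs t)) (mwPol Qs η t) 1 M.s1 = 0 := by
      intro t _
      have e : ∀ p : ℕ → S → A → ℝ,
          Vfin M (inducedRewardFin M (mwPol Qs η t) (Qs t)) p 1 M.s1 = 0 := by
        intro p
        show (∑ a : A, p 1 M.s1 a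
          * QfinAux M (inducedRewardFin M (mwPol Qs η t) (Qs t)) p (M.H + 1 - 1) 1 (M.s1, a)) = 0
        rw [hH0]
        show (∑ a : A, p 1 M.s1 a * (0:ℝ)) = 0
        simp
      rw [e, e]; ring
    rw [Finset.sum_congr rfl hzero]
    rw [hH0]
    simp
  · obtain ⟨hkm, hkb, hkr⟩ := key_induction M b hb T Qs hQm hQtop habsQ
      (fun t => mwPol Qs η t)
      (fun t h s a => (mwAux_pos hcard Qs η (t-1) h s a).le)
      (fun t h s => mwAux_sum hcard Qs η (t-1) h s)
      (fun t h a => mwAux_meas Qs η hQm (t-1) h a)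
      pc hpc0 hpc1 hpcm R hreg M.H 1 le_rfl (by omega)
    have hV : ∀ t ∈ Finset.Icc 1 T,
        Vfin M (inducedRewardFin M (mwPol Qs η t) (Qs t)) pc 1 M.s1
          - Vfin M (inducedRewardFin M (mwPol Qs η t) (Qs t)) (mwPol Qs η t) 1 M.s1
        = (∑ a : A, (pc 1 M.s1 a - mwPol Qs η t 1 M.s1 a) * Qs t 1 (M.s1, a))
          + ∑ a : A, pc 1 M.s1 a
              * Gd M Qs (fun t => mwPol Qs η t) pc t M.H 1 (M.s1, a) := by
      intro t _
      have hidx : M.H + 1 - 1 = M.H := by omega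
      have e2 : Vfin M (inducedRewardFin M (mwPol Qs η t) (Qs t)) (mwPol Qs η t) 1 M.s1
          = ∑ a : A, mwPol Qs η t 1 M.s1 a * Qs t 1 (M.s1, a) := by
        show (∑ a : A, mwPol Qs η t 1 M.s1 a
            * QfinAux M (inducedRewardFin M (mwPol Qs η t) (Qs t)) (mwPol Qs η t)
                (M.H + 1 - 1) 1 (M.s1, a)) = _
        rw [hidx, qfin_eq_Q M (Qs t) (mwPol Qs η t) (hQtop t) M.H 1 (by omega)]
      have e1 : Vfin M (inducedRewardFin M (mwPol Qs η t) (Qs t)) pc 1 M.s1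
          = ∑ a : A, pc 1 M.s1 a
              * QfinAux M (inducedRewardFin M (mwPol Qs η t) (Qs t)) pc M.H 1 (M.s1, a) := by
        show (∑ a : A, pc 1 M.s1 a
            * QfinAux M (inducedRewardFin M (mwPol Qs η t) (Qs t)) pc (M.H + 1 - 1) 1 (M.s1, a)) = _
        rw [hidx]
      rw [e1, e2, ← Finset.sum_sub_distrib, ← Finset.sum_add_distrib]
      refine Finset.sum_congr rfl (fun a _ => ?_)
      simp only [Gd]
      ring
    rw [Finset.sum_congr rfl hV, Finset.sum_add_distrib]
    have h1 := hreg 1 le_rfl (by omega) M.s1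
    have h2 : ∑ t ∈ Finset.Icc 1 T, ∑ a : A,
        pc 1 M.s1 a * Gd M Qs (fun t => mwPol Qs η t) pc t M.H 1 (M.s1, a)
        ≤ ((M.H - 1 : ℕ) : ℝ) * R := by
      rw [Finset.sum_comm]
      calc ∑ a : A, ∑ t ∈ Finset.Icc 1 T,
            pc 1 M.s1 a * Gd M Qs (fun t => mwPol Qs η t) pc t M.H 1 (M.s1, a)
          = ∑ a : A, pc 1 M.s1 a
              * ∑ t ∈ Finset.Icc 1 T, Gd M Qs (fun t => mwPol Qs η t) pc t M.H 1 (M.s1, a) :=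
            Finset.sum_congr rfl (fun a _ => (Finset.mul_sum _ _ _).symm)
        _ ≤ ∑ a : A, pc 1 M.s1 a * (((M.H - 1 : ℕ) : ℝ) * R) :=
            Finset.sum_le_sum (fun a _ =>
              mul_le_mul_of_nonneg_left (hkr (M.s1, a)) (hpc0 1 M.s1 a))
        _ = ((M.H - 1 : ℕ) : ℝ) * R := by rw [← Finset.sum_mul, hpc1, one_mul]
    have hcast : ((M.H - 1 : ℕ) : ℝ) = (M.H : ℝ) - 1 := by
      rw [Nat.cast_sub hH1]; norm_num
    have hRle : R ≤ 4 * b * Real.sqrt ((T:ℝ) * L) := by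
      have hsTL : Real.sqrt ((T:ℝ) * L) = sT * sL := by
        rw [hsTdef, hsLdef, ← Real.sqrt_mul hT0.le]
      have e1' : L / η = 2*b*sc*(sT*sL) := by
        rw [hηeq, ← hsL2]
        field_simp
      have e2' : 3/4 * η * T * b^2 = 3/8 * (b/sc) * (sT*sL) := by
        rw [hηeq, ← hsT2]
        field_simp
        ring
      have hsc8 : (0.8:ℝ) < sc := by nlinarith only [hsc2, hc01, hsc0]
      have hsc85 : sc < 0.85 := by nlinarith only [hsc2, hc02, hsc0]
      have hd : (3/8 : ℝ)/sc ≤ 0.46875 := by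
        rw [div_le_iff₀ hsc0]; nlinarith only [hsc8]
      have hx0 : (0:ℝ) ≤ b * (sT*sL) := mul_nonneg hb.le (mul_nonneg hsT0.le hsL0.le)
      have t1 : 3/8 * (b/sc) * (sT*sL) = ((3/8)/sc)*(b*(sT*sL)) := by ring
      have t2 := mul_le_mul_of_nonneg_right hd hx0
      have t3 : 2*b*sc*(sT*sL) = (2*sc)*(b*(sT*sL)) := by ring
      have t4 := mul_le_mul_of_nonneg_right (show 2*sc ≤ (1.7:ℝ) by linarith only [hsc85]) hx0
      rw [hRdef, e1', e2', hsTL]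
      linarith only [t1, t2, t3, t4, hx0]
    calc (∑ t ∈ Finset.Icc 1 T, ∑ a : A,
            (pc 1 M.s1 a - mwPol Qs η t 1 M.s1 a) * Qs t 1 (M.s1, a))
          + ∑ t ∈ Finset.Icc 1 T, ∑ a : A,
              pc 1 M.s1 a * Gd M Qs (fun t => mwPol Qs η t) pc t M.H 1 (M.s1, a)
        ≤ R + ((M.H - 1 : ℕ) : ℝ) * R := add_le_add h1 h2
      _ = (M.H : ℝ) * R := by rw [hcast]; ring
      _ ≤ (M.H : ℝ) * (4 * b * Real.sqrt ((T:ℝ) * L)) :=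
          mul_le_mul_of_nonneg_left hRle (Nat.cast_nonneg _)
      _ = 4 * (M.H : ℝ) * b * Real.sqrt ((T:ℝ) * L) := by ring

end FiniteActions
end

section
/- Moments of the excess TD loss (squared Bellman residual identity and variance bound): Fix h ∈ [H], a state-action pair (s,a), a policy π̃, and bounded measurable functions f_h, f_{h+1} : S × A → [−b, b]. Let z = (s, a, r, s') where, conditionally on (s,a), the random reward r satisfies |r| ≤ b almost surely and E[r | s,a] = r_h(s,a), and s' has law P_h(·|s,a). Then E[ ΔL_{π̃}(f_h, f_{h+1}; z) | s,a ] = E_h^{π̃}(f_h, f_{h+1})(s,a)², and E[ ΔL_{π̃}(f_h, f_{h+1}; z)² | s,a ] ≤ 36 b² · E_h^{π̃}(f_h, f_{h+1})(s,a)². -/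
open MeasureTheory
open scoped ENNReal

variable {S A : Type*} [MeasurableSpace S] [MeasurableSpace A]

/-- The TD loss of a transition `z = (s, a, r, s')`:
`l_{π̃}(g, f_{h+1}; z) = (g(s,a) − r − f_{h+1}(s', π̃_{h+1}))²`. -/
noncomputable def tdLoss (pol : PolicyKer S A) (h : ℕ) (g fnext : S × A → ℝ)
    (z : S × A × ℝ × S) : ℝ :=
  (g (z.1, z.2.1) - z.2.2.1 - ∫ a', fnext (z.2.2.2, a') ∂(pol (h + 1) z.2.2.2)) ^ 2

/-- The excess TD loss
`ΔL_{π̃}(f_h, f_{h+1}; z) = l_{π̃}(f_h, f_{h+1}; z) − l_{π̃}(T_h^{π̃} f_{h+1}, f_{h+1}; z)`. -/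
noncomputable def excessTD (M : EpisodicMDP S A) (pol : PolicyKer S A) (h : ℕ)
    (fh fnext : S × A → ℝ) (z : S × A × ℝ × S) : ℝ :=
  tdLoss pol h fh fnext z - tdLoss pol h (bellmanOp M pol h fnext) fnext z

/-- **Moments of the excess TD loss.**  Fix a step `h`, a state-action pair `(s,a)`, a policy
`π̃`, and functions `f_h, f_{h+1}` bounded by `b`.  If `ζ` is the conditional joint law of
`(r, s')` given `(s,a)` — so that `|r| ≤ b` a.s., `E[r] = r_h(s,a)`, and the second marginal
of `ζ` is `P_h(·|s,a)` — then
`E[ΔL | s,a] = E_h^{π̃}(f_h,f_{h+1})(s,a)²` and `E[ΔL² | s,a] ≤ 36 b² E_h^{π̃}(f_h,f_{h+1})(s,a)²`. -/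
theorem excess_td_moments
    (M : EpisodicMDP S A) (b : ℝ) (hb : 1 ≤ b) (hr : ∀ h sa, |M.r h sa| ≤ b)
    (pol : PolicyKer S A) (hpol : IsPolicy pol)
    (h : ℕ) (s : S) (a : A)
    (fh fnext : S × A → ℝ) (hfhm : Measurable fh) (hfnm : Measurable fnext)
    (hfhb : ∀ sa, fh sa ∈ Set.Icc (-b) b) (hfnb : ∀ sa, fnext sa ∈ Set.Icc (-b) b)
    (ζ : Measure (ℝ × S)) [IsProbabilityMeasure ζ]
    (hmarg : ζ.map Prod.snd = M.P h (s, a))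
    (hrb : ∀ᵐ z ∂ζ, |z.1| ≤ b)
    (hrmean : ∫ z, z.1 ∂ζ = M.r h (s, a)) :
    (∫ z, excessTD M pol h fh fnext (s, a, z.1, z.2) ∂ζ)
        = (bellmanErr M pol h fh fnext (s, a)) ^ 2
    ∧ (∫ z, (excessTD M pol h fh fnext (s, a, z.1, z.2)) ^ 2 ∂ζ)
        ≤ 36 * b ^ 2 * (bellmanErr M pol h fh fnext (s, a)) ^ 2 := by
  classical
  obtain ⟨hpol1, hpol2⟩ := hpol
  have hb0 : (0:ℝ) < b := lt_of_lt_of_le one_pos hb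
  -- the "next value" function V
  set V : S → ℝ := fun s' => ∫ a', fnext (s', a') ∂(pol (h+1) s') with hV
  have hVm : StronglyMeasurable V := by
    let κ : ProbabilityTheory.Kernel S A := ⟨pol (h+1), hpol2 (h+1)⟩
    have : ProbabilityTheory.IsMarkovKernel κ := ⟨fun s => hpol1 (h+1) s⟩
    exact hfnm.stronglyMeasurable.integral_kernel_prod_right' (κ := κ)
  have hVb : ∀ s', |V s'| ≤ b := by
    intro s'
    have := hpol1 (h+1) s'
    calc |V s'| ≤ b * ((pol (h+1) s') Set.univ).toReal := by
          rw [← Real.norm_eq_abs]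
          exact norm_integral_le_of_norm_le_const (Filter.Eventually.of_forall fun a' => by
            rw [Real.norm_eq_abs]; exact abs_le.mpr ⟨(hfnb _).1, (hfnb _).2⟩)
      _ = b := by simp
  set c := fh (s, a) with hc
  set T0 := bellmanOp M pol h fnext (s, a) with hT0
  set e := bellmanErr M pol h fh fnext (s, a) with he
  have heT : e = T0 - c := rfl
  have hT0val : T0 = M.r h (s,a) + ∫ s', V s' ∂(M.P h (s,a)) := rfl
  have hPprob := M.P_prob h (s,a)
  have hT0b : |T0| ≤ 2 * b := by
    rw [hT0val]
    have h2 : |∫ s', V s' ∂(M.P h (s,a))| ≤ b := by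
      calc |∫ s', V s' ∂(M.P h (s,a))| ≤ b * ((M.P h (s,a)) Set.univ).toReal := by
            rw [← Real.norm_eq_abs]
            exact norm_integral_le_of_norm_le_const (Filter.Eventually.of_forall fun s' => by
              rw [Real.norm_eq_abs]; exact hVb s')
        _ = b := by simp
    calc |M.r h (s,a) + ∫ s', V s' ∂(M.P h (s,a))|
        ≤ |M.r h (s,a)| + |∫ s', V s' ∂(M.P h (s,a))| := abs_add_le _ _
      _ ≤ b + b := add_le_add (hr h (s,a)) h2
      _ = 2*b := by ring
  have hcb : |c| ≤ b := abs_le.mpr ⟨(hfhb _).1, (hfhb _).2⟩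
  have heb : |e| ≤ 3 * b := by
    rw [heT]
    calc |T0 - c| ≤ |T0| + |c| := abs_sub _ _
      _ ≤ 2*b + b := add_le_add hT0b hcb
      _ = 3*b := by ring
  -- y and w
  set y : ℝ × S → ℝ := fun z => z.1 + V z.2 with hy
  set w : ℝ × S → ℝ := fun z => y z - T0 with hw
  have hym : AEStronglyMeasurable y ζ :=
    (measurable_fst.stronglyMeasurable.add
      (hVm.comp_measurable measurable_snd)).aestronglyMeasurable
  have hwm : AEStronglyMeasurable w ζ := hym.sub aestronglyMeasurable_const
  have hyb : ∀ᵐ z ∂ζ, |y z| ≤ 2 * b := by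
    filter_upwards [hrb] with z hz
    calc |y z| ≤ |z.1| + |V z.2| := abs_add_le _ _
      _ ≤ b + b := add_le_add hz (hVb z.2)
      _ = 2*b := by ring
  have hwb : ∀ᵐ z ∂ζ, |w z| ≤ 4 * b := by
    filter_upwards [hyb] with z hz
    calc |w z| ≤ |y z| + |T0| := abs_sub _ _
      _ ≤ 2*b + 2*b := add_le_add hz hT0b
      _ = 4*b := by ring
  -- integrability from boundedness
  have hint : ∀ (f : ℝ × S → ℝ) (C : ℝ), AEStronglyMeasurable f ζ →
      (∀ᵐ z ∂ζ, |f z| ≤ C) → Integrable f ζ := fun f C hm hbd =>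
    (integrable_const C).mono' hm (hbd.mono fun z hz => by rwa [Real.norm_eq_abs])
  have hy_int : Integrable y ζ := hint y (2*b) hym hyb
  have hw_int : Integrable w ζ := hint w (4*b) hwm hwb
  have hy2m : AEStronglyMeasurable (fun z => y z ^ 2) ζ := hym.pow 2
  have hy2_int : Integrable (fun z => y z ^ 2) ζ := by
    refine hint _ ((2*b)^2) hy2m ?_
    filter_upwards [hyb] with z hz
    rw [abs_pow]
    exact pow_le_pow_left₀ (abs_nonneg _) hz 2
  have hw2_int : Integrable (fun z => w z ^ 2) ζ := by
    refine hint _ ((4*b)^2) (hwm.pow 2) ?_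
    filter_upwards [hwb] with z hz
    rw [abs_pow]
    exact pow_le_pow_left₀ (abs_nonneg _) hz 2
  have hr_int : Integrable (fun z : ℝ × S => z.1) ζ :=
    hint _ b measurable_fst.aestronglyMeasurable hrb
  have hVs_int : Integrable (fun z : ℝ × S => V z.2) ζ :=
    hint _ b (hVm.comp_measurable measurable_snd).aestronglyMeasurable
      (Filter.Eventually.of_forall fun z => hVb z.2)
  -- mean of y
  have hy_mean : ∫ z, y z ∂ζ = T0 := by
    have hmap : ∫ z : ℝ × S, V z.2 ∂ζ = ∫ s', V s' ∂(M.P h (s,a)) := by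
      rw [← hmarg, integral_map measurable_snd.aemeasurable hVm.aestronglyMeasurable]
    rw [hy]
    rw [integral_add hr_int hVs_int, hrmean, hmap, hT0val]
  have hw_mean : ∫ z, w z ∂ζ = 0 := by
    rw [hw]
    rw [integral_sub hy_int (integrable_const T0), hy_mean, integral_const]
    simp
  -- pointwise identity for the excess TD loss
  have key : ∀ z : ℝ × S, excessTD M pol h fh fnext (s, a, z.1, z.2)
      = e * (2 * w z + e) := by
    intro z
    have h1 : excessTD M pol h fh fnext (s, a, z.1, z.2)
        = (c - z.1 - V z.2)^2 - (T0 - z.1 - V z.2)^2 := rfl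
    rw [h1, heT, hw, hy]
    ring
  -- first moment
  have hfirst : (∫ z, excessTD M pol h fh fnext (s, a, z.1, z.2) ∂ζ) = e ^ 2 := by
    rw [integral_congr_ae (Filter.Eventually.of_forall key), integral_const_mul,
      integral_add (hw_int.const_mul 2) (integrable_const e), integral_const_mul,
      hw_mean, integral_const]
    simp [sq]
  refine ⟨hfirst, ?_⟩
  -- second moment
  have hw2_mean : ∫ z, w z ^ 2 ∂ζ = (∫ z, y z ^ 2 ∂ζ) - T0 ^ 2 := by
    have hpt : ∀ z : ℝ × S, w z ^ 2 = y z ^ 2 - 2 * T0 * y z + T0 ^ 2 := by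
      intro z; rw [hw]; ring
    have hsub : Integrable (fun z => y z ^ 2 - 2 * T0 * y z) ζ :=
      hy2_int.sub (hy_int.const_mul (2*T0))
    rw [integral_congr_ae (Filter.Eventually.of_forall hpt),
      integral_add hsub (integrable_const (T0^2)),
      integral_sub hy2_int (hy_int.const_mul (2*T0)), integral_const_mul, hy_mean, integral_const]
    simp
    ring
  have hy2_le : ∫ z, y z ^ 2 ∂ζ ≤ 4 * b ^ 2 := by
    have : ∫ z, y z ^ 2 ∂ζ ≤ ∫ _ : ℝ × S, (2*b)^2 ∂ζ := by
      refine integral_mono_ae hy2_int (integrable_const _) ?_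
      filter_upwards [hyb] with z hz
      rw [← sq_abs]
      exact pow_le_pow_left₀ (abs_nonneg _) hz 2
    rw [integral_const] at this
    simp at this
    nlinarith
  have hw2_le : ∫ z, w z ^ 2 ∂ζ ≤ 4 * b ^ 2 := by
    rw [hw2_mean]
    exact (sub_le_self _ (sq_nonneg T0)).trans hy2_le
  have hw2_nonneg : 0 ≤ ∫ z, w z ^ 2 ∂ζ :=
    integral_nonneg fun z => sq_nonneg _
  have he2 : e ^ 2 ≤ 9 * b ^ 2 := by
    have := heb
    nlinarith [abs_nonneg e, neg_abs_le e, le_abs_self e]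
  have hsecond : (∫ z, (excessTD M pol h fh fnext (s, a, z.1, z.2)) ^ 2 ∂ζ)
      = e ^ 2 * (4 * (∫ z, w z ^ 2 ∂ζ) + e ^ 2) := by
    have hpt : ∀ z : ℝ × S, (excessTD M pol h fh fnext (s, a, z.1, z.2)) ^ 2
        = (e^2 * 4) * w z ^ 2 + ((4 * e^3) * w z + e^4) := by
      intro z; rw [key z]; ring
    have hadd : Integrable (fun z => 4 * e ^ 3 * w z + e ^ 4) ζ :=
      (hw_int.const_mul (4*e^3)).add (integrable_const (e^4))
    rw [integral_congr_ae (Filter.Eventually.of_forall hpt),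
      integral_add (hw2_int.const_mul (e^2*4)) hadd,
      integral_const_mul, integral_add (hw_int.const_mul (4*e^3)) (integrable_const (e^4)),
      integral_const_mul, hw_mean, integral_const]
    simp
    ring
  rw [hsecond]
  nlinarith [sq_nonneg e, sq_nonneg b, mul_nonneg (sq_nonneg e) (sq_nonneg b)]
end

section
/- Exponential-moment bound for the negated excess TD loss: Under the one-step transition model (conditionally on (s,a), |r| ≤ b a.s. with E[r|s,a] = r_h(s,a) and s' ∼ P_h(·|s,a)), for any bounded measurable f_h, f_{h+1} : S × A → [−b, b], any policy π̃, and any 0 ≤ γ ≤ 1/(72(e−2)b²): ln E[ exp(−2γ ΔL_{π̃}(f_h, f_{h+1}; z)) | s,a ] ≤ −2γ (1 − 72(e−2) γ b²) · E_h^{π̃}(f_h, f_{h+1})(s,a)². -/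
open MeasureTheory
open scoped ENNReal

variable {S A : Type*} [MeasurableSpace S] [MeasurableSpace A]

lemma aux_exp_le {x : ℝ} (hx : |x| ≤ 2/3) : Real.exp x ≤ 1 + x + (Real.exp 1 - 2) * x ^ 2 := by
  have h1 : |x| ≤ 1 := hx.trans (by norm_num)
  have hb := Real.exp_bound h1 (by norm_num : 0 < 3)
  have hsum : ∑ m ∈ Finset.range 3, x ^ m / m.factorial = 1 + x + x ^ 2 / 2 := by
    simp [Finset.sum_range_succ]
  rw [hsum] at hb
  have h2 : Real.exp x - (1 + x + x ^ 2 / 2) ≤ |x| ^ 3 * (2/9) := by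
    have h3 := (abs_le.mp hb).2
    have : ((Nat.succ 3 : ℕ) : ℝ) / ((Nat.factorial 3 : ℕ) * (3:ℕ)) = 2/9 := by norm_num [Nat.factorial]
    rw [this] at h3
    linarith
  have h3 : |x| ^ 3 ≤ (2/3) * x ^ 2 := by
    have h4 : |x| ^ 3 = |x| * x ^ 2 := by
      rw [pow_succ, sq_abs]; ring
    rw [h4]
    nlinarith [sq_nonneg x, abs_nonneg x]
  have he : (35:ℝ)/54 ≤ Real.exp 1 - 2 := by nlinarith [Real.exp_one_gt_d9]
  nlinarith [sq_nonneg x]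

lemma aux_integrable {α : Type*} [MeasurableSpace α] {μ : Measure α} [IsFiniteMeasure μ]
    {f : α → ℝ} {C : ℝ} (hm : AEStronglyMeasurable f μ) (hC : ∀ᵐ x ∂μ, |f x| ≤ C) :
    Integrable f μ :=
  (integrable_const C).mono' hm (by filter_upwards [hC] with x hx; simpa using hx)

set_option maxHeartbeats 1000000 in
lemma aux_key {Ω : Type*} [MeasurableSpace Ω] (μ : Measure Ω) [IsProbabilityMeasure μ]
    (y : Ω → ℝ) (hy : Measurable y) (b g T γ : ℝ) (hb : 1 ≤ b)
    (hyb : ∀ᵐ z ∂μ, |y z| ≤ 2 * b) (hyI : ∫ z, y z ∂μ = T)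
    (hg : |g| ≤ b) (hT : |T| ≤ 2 * b) (hγ0 : 0 ≤ γ)
    (hγ : γ ≤ 1 / (72 * (Real.exp 1 - 2) * b ^ 2)) :
    Real.log (∫ z, Real.exp (-2 * γ * ((g - y z) ^ 2 - (T - y z) ^ 2)) ∂μ)
      ≤ -2 * γ * (1 - 72 * (Real.exp 1 - 2) * γ * b ^ 2) * (T - g) ^ 2 := by
  have hbpos : (0:ℝ) < b := one_pos.trans_le hb
  have he2 : (2:ℝ)/3 ≤ Real.exp 1 - 2 := by nlinarith [Real.exp_one_gt_d9]
  have he2pos : (0:ℝ) < Real.exp 1 - 2 := by linarith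
  obtain ⟨E, hE⟩ : ∃ E : ℝ, E = Real.exp 1 := ⟨_, rfl⟩
  rw [← hE] at he2 he2pos hγ ⊢
  obtain ⟨hg1, hg2⟩ := abs_le.mp hg
  obtain ⟨hT1, hT2⟩ := abs_le.mp hT
  have hγb : 72 * (E - 2) * b ^ 2 * γ ≤ 1 := by
    have hc : (0:ℝ) < 72 * (E - 2) * b ^ 2 := by positivity
    have := (le_div_iff₀ hc).mp hγ
    linarith
  obtain ⟨X, hX⟩ : ∃ X : Ω → ℝ, X = fun z => (g - y z) ^ 2 - (T - y z) ^ 2 := ⟨_, rfl⟩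
  have hXz : ∀ z, X z = (g - y z) ^ 2 - (T - y z) ^ 2 := fun z => by rw [hX]
  have hXm : Measurable X := by
    rw [hX]
    apply Measurable.sub <;> exact (measurable_const.sub hy).pow_const 2
  -- a.e. bound on X
  have hXb : ∀ᵐ z ∂μ, -(16 * b ^ 2) ≤ X z ∧ X z ≤ 9 * b ^ 2 := by
    filter_upwards [hyb] with z hz
    obtain ⟨hz1, hz2⟩ := abs_le.mp hz
    rw [hXz]
    constructor
    · nlinarith [sq_nonneg (g - y z)]
    · nlinarith [sq_nonneg (T - y z)]
  have hXabs : ∀ᵐ z ∂μ, |X z| ≤ 16 * b ^ 2 := by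
    filter_upwards [hXb] with z hz
    rw [abs_le]
    exact ⟨by linarith [hz.1], by nlinarith [hz.2, sq_nonneg b]⟩
  have harg : ∀ᵐ z ∂μ, |(-2 : ℝ) * γ * X z| ≤ 2/3 := by
    filter_upwards [hXabs] with z hz
    have h1 : |(-2 : ℝ) * γ * X z| = 2 * γ * |X z| := by
      rw [abs_mul, abs_mul, abs_of_nonneg hγ0]
      norm_num
    rw [h1]
    have h2 : 2 * γ * |X z| ≤ 2 * γ * (16 * b ^ 2) :=
      mul_le_mul_of_nonneg_left hz (by linarith)
    have h3 : 32 * (γ * b ^ 2) * (E - 2) ≤ 32 / 72 := by nlinarith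
    nlinarith [mul_nonneg hγ0 (sq_nonneg b)]
  -- integrability
  have hy_int : Integrable y μ := aux_integrable hy.aestronglyMeasurable hyb
  have hy2_int : Integrable (fun z => y z ^ 2) μ := by
    apply aux_integrable (C := 4 * b ^ 2) ((hy.pow_const 2).aestronglyMeasurable)
    filter_upwards [hyb] with z hz
    rw [abs_pow]
    nlinarith [abs_nonneg (y z), sq_abs (y z)]
  have hX_int : Integrable X μ := aux_integrable hXm.aestronglyMeasurable hXabs
  have hX2_int : Integrable (fun z => X z ^ 2) μ := by
    apply aux_integrable (C := (16 * b ^ 2) ^ 2) ((hXm.pow_const 2).aestronglyMeasurable)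
    filter_upwards [hXabs] with z hz
    rw [abs_pow]
    nlinarith [abs_nonneg (X z), sq_abs (X z), sq_nonneg b]
  -- second moment of y
  have hVb : ∫ z, y z ^ 2 ∂μ ≤ 4 * b ^ 2 := by
    have hy2b : (fun z => y z ^ 2) ≤ᵐ[μ] (fun _ => 4 * b ^ 2) := by
      filter_upwards [hyb] with z hz
      have h1 : y z ^ 2 = |y z| ^ 2 := (sq_abs (y z)).symm
      have h2 : (0:ℝ) ≤ |y z| := abs_nonneg _
      nlinarith
    have := integral_mono_ae hy2_int (integrable_const (4 * b ^ 2)) hy2b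
    simpa using this
  -- first moment of X
  have hIX : ∫ z, X z ∂μ = (T - g) ^ 2 := by
    have hfe : ∀ z, X z = (g ^ 2 - T ^ 2) + (-(2 * (g - T))) * y z := by
      intro z; rw [hXz]; ring
    calc ∫ z, X z ∂μ = ∫ z, ((g ^ 2 - T ^ 2) + (-(2 * (g - T))) * y z) ∂μ := by simp_rw [hfe]
      _ = (g ^ 2 - T ^ 2) + (-(2 * (g - T))) * T := by
          rw [integral_add (integrable_const _) (hy_int.const_mul _), integral_const_mul, hyI]
          simp
      _ = (T - g) ^ 2 := by ring
  -- second moment of X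
  have hIX2 : ∫ z, X z ^ 2 ∂μ ≤ 36 * b ^ 2 * (T - g) ^ 2 := by
    have hfe : ∀ z, X z ^ 2 = (g ^ 2 - T ^ 2) ^ 2
        + ((-(4 * (g ^ 2 - T ^ 2) * (g - T))) * y z + (4 * (g - T) ^ 2) * y z ^ 2) := by
      intro z; rw [hXz]; ring
    have hI1 : Integrable (fun z => (-(4 * (g ^ 2 - T ^ 2) * (g - T))) * y z
        + (4 * (g - T) ^ 2) * y z ^ 2) μ := by
      exact (hy_int.const_mul _).add (hy2_int.const_mul _)
    have heq : ∫ z, X z ^ 2 ∂μ = (g ^ 2 - T ^ 2) ^ 2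
        + ((-(4 * (g ^ 2 - T ^ 2) * (g - T))) * T + (4 * (g - T) ^ 2) * ∫ z, y z ^ 2 ∂μ) := by
      calc ∫ z, X z ^ 2 ∂μ = ∫ z, ((g ^ 2 - T ^ 2) ^ 2
          + ((-(4 * (g ^ 2 - T ^ 2) * (g - T))) * y z + (4 * (g - T) ^ 2) * y z ^ 2)) ∂μ := by
            simp_rw [hfe]
        _ = _ := by
            rw [integral_add (integrable_const _) hI1,
              integral_add (hy_int.const_mul _) (hy2_int.const_mul _),
              integral_const_mul, integral_const_mul, hyI]
            simp
    rw [heq]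
    have hkey : (g ^ 2 - T ^ 2) ^ 2 + ((-(4 * (g ^ 2 - T ^ 2) * (g - T))) * T
        + (4 * (g - T) ^ 2) * ∫ z, y z ^ 2 ∂μ)
        = (g - T) ^ 2 * ((g - T) ^ 2 + 4 * ((∫ z, y z ^ 2 ∂μ) - T ^ 2)) := by ring
    rw [hkey]
    have h1 : (g - T) ^ 2 + 4 * ((∫ z, y z ^ 2 ∂μ) - T ^ 2) ≤ 36 * b ^ 2 := by
      nlinarith [sq_nonneg T]
    have h2 : (g - T) ^ 2 * ((g - T) ^ 2 + 4 * ((∫ z, y z ^ 2 ∂μ) - T ^ 2))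
        ≤ (g - T) ^ 2 * (36 * b ^ 2) := mul_le_mul_of_nonneg_left h1 (sq_nonneg _)
    nlinarith [h2]
  -- pointwise exponential bound
  have hpt : ∀ᵐ z ∂μ, Real.exp (-2 * γ * X z)
      ≤ 1 + (-2 * γ * X z + ((E - 2) * (4 * γ ^ 2)) * X z ^ 2) := by
    filter_upwards [harg] with z hz
    have h1 := aux_exp_le hz
    rw [← hE] at h1
    nlinarith [h1]
  -- integrability of both sides
  have hexp_int : Integrable (fun z => Real.exp (-2 * γ * X z)) μ := by
    apply aux_integrable (C := Real.exp 1) ((measurable_const.mul hXm).exp).aestronglyMeasurable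
    filter_upwards [harg] with z hz
    rw [Real.abs_exp]
    apply Real.exp_le_exp.mpr
    show -2 * γ * X z ≤ 1
    linarith [(abs_le.mp hz).2]
  have hlin_int : Integrable (fun z => -2 * γ * X z + ((E - 2) * (4 * γ ^ 2)) * X z ^ 2) μ := by
    exact (hX_int.const_mul _).add (hX2_int.const_mul _)
  have hrhs_int : Integrable
      (fun z => 1 + (-2 * γ * X z + ((E - 2) * (4 * γ ^ 2)) * X z ^ 2)) μ := by
    exact (integrable_const 1).add hlin_int
  -- integrate
  have hIrhs : ∫ z, (1 + (-2 * γ * X z + ((E - 2) * (4 * γ ^ 2)) * X z ^ 2)) ∂μ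
      = 1 + (-2 * γ * (T - g) ^ 2 + ((E - 2) * (4 * γ ^ 2)) * ∫ z, X z ^ 2 ∂μ) := by
    rw [integral_add (integrable_const _) hlin_int,
      integral_add (hX_int.const_mul _) (hX2_int.const_mul _),
      integral_const_mul, integral_const_mul, hIX]
    simp
  have hmain : (∫ z, Real.exp (-2 * γ * X z) ∂μ)
      ≤ 1 + (-2 * γ * (T - g) ^ 2 + ((E - 2) * (4 * γ ^ 2)) * ∫ z, X z ^ 2 ∂μ) := by
    rw [← hIrhs]
    exact integral_mono_ae hexp_int hrhs_int hpt
  have hI2 : ((E - 2) * (4 * γ ^ 2)) * (∫ z, X z ^ 2 ∂μ)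
      ≤ ((E - 2) * (4 * γ ^ 2)) * (36 * b ^ 2 * (T - g) ^ 2) :=
    mul_le_mul_of_nonneg_left hIX2 (by positivity)
  have hIle : (∫ z, Real.exp (-2 * γ * X z) ∂μ)
      ≤ 1 + -2 * γ * (1 - 72 * (E - 2) * γ * b ^ 2) * (T - g) ^ 2 := by
    have hr : 1 + (-2 * γ * (T - g) ^ 2 + ((E - 2) * (4 * γ ^ 2)) * (36 * b ^ 2 * (T - g) ^ 2))
        = 1 + -2 * γ * (1 - 72 * (E - 2) * γ * b ^ 2) * (T - g) ^ 2 := by ring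
    linarith [hmain, hI2]
  -- positivity of the integral
  have hIpos : 0 < ∫ z, Real.exp (-2 * γ * X z) ∂μ := by
    have hlb : ∀ᵐ z ∂μ, Real.exp (-(1:ℝ)) ≤ Real.exp (-2 * γ * X z) := by
      filter_upwards [harg] with z hz
      apply Real.exp_le_exp.mpr
      linarith [(abs_le.mp hz).1]
    have := integral_mono_ae (integrable_const (Real.exp (-(1:ℝ)))) hexp_int hlb
    simp only [integral_const, measure_univ, ENNReal.toReal_one, one_smul, probReal_univ] at this
    linarith [Real.exp_pos (-(1:ℝ))]
  calc Real.log (∫ z, Real.exp (-2 * γ * ((g - y z) ^ 2 - (T - y z) ^ 2)) ∂μ)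
      = Real.log (∫ z, Real.exp (-2 * γ * X z) ∂μ) := by simp_rw [hXz]
    _ ≤ (∫ z, Real.exp (-2 * γ * X z) ∂μ) - 1 := Real.log_le_sub_one_of_pos hIpos
    _ ≤ -2 * γ * (1 - 72 * (E - 2) * γ * b ^ 2) * (T - g) ^ 2 := by linarith
/-- **Exponential-moment bound for the negated excess TD loss.**  Under the one-step
transition model of a step `h` at `(s,a)` (conditional reward bounded by `b` with mean
`r_h(s,a)`, next state distributed as `P_h(·|s,a)`), for functions bounded by `b` and any
`0 ≤ γ ≤ 1/(72(e−2)b²)`,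
`ln E[exp(−2γ ΔL) | s,a] ≤ −2γ (1 − 72(e−2) γ b²) E_h^{π̃}(f_h,f_{h+1})(s,a)²`. -/
theorem excess_td_exponential_moment
    (M : EpisodicMDP S A) (b : ℝ) (hb : 1 ≤ b) (hr : ∀ h sa, |M.r h sa| ≤ b)
    (pol : PolicyKer S A) (hpol : IsPolicy pol)
    (h : ℕ) (s : S) (a : A)
    (fh fnext : S × A → ℝ) (hfhm : Measurable fh) (hfnm : Measurable fnext)
    (hfhb : ∀ sa, fh sa ∈ Set.Icc (-b) b) (hfnb : ∀ sa, fnext sa ∈ Set.Icc (-b) b)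
    (ζ : Measure (ℝ × S)) [IsProbabilityMeasure ζ]
    (hmarg : ζ.map Prod.snd = M.P h (s, a))
    (hrb : ∀ᵐ z ∂ζ, |z.1| ≤ b)
    (hrmean : ∫ z, z.1 ∂ζ = M.r h (s, a))
    (γ : ℝ) (hγ0 : 0 ≤ γ) (hγ : γ ≤ 1 / (72 * (Real.exp 1 - 2) * b ^ 2)) :
    Real.log (∫ z, Real.exp (-2 * γ * excessTD M pol h fh fnext (s, a, z.1, z.2)) ∂ζ)
      ≤ -2 * γ * (1 - 72 * (Real.exp 1 - 2) * γ * b ^ 2) *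
          (bellmanErr M pol h fh fnext (s, a)) ^ 2 := by
  obtain ⟨hpol1, hpol2⟩ := hpol
  have hP : IsProbabilityMeasure (M.P h (s, a)) := M.P_prob h (s, a)
  -- the next-state value function F
  set κ : ProbabilityTheory.Kernel S A := ⟨pol (h+1), hpol2 (h+1)⟩ with hκ
  have hκm : ProbabilityTheory.IsMarkovKernel κ := ⟨fun s => hpol1 (h+1) s⟩
  set F : S → ℝ := fun s' => ∫ a', fnext (s', a') ∂(pol (h + 1) s') with hF
  have hFmeas : StronglyMeasurable F := by
    have := (hfnm.stronglyMeasurable).integral_kernel_prod_right' (κ := κ)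
    exact this
  have hFb : ∀ s', |F s'| ≤ b := by
    intro s'
    have : IsProbabilityMeasure (pol (h + 1) s') := hpol1 _ _
    have h1 := norm_integral_le_of_norm_le_const (μ := pol (h + 1) s') (C := b)
      (f := fun a' => fnext (s', a'))
      (Filter.Eventually.of_forall (fun a' => by
        rw [Real.norm_eq_abs]
        exact abs_le.mpr ⟨(hfnb _).1, (hfnb _).2⟩))
    simpa [Real.norm_eq_abs] using h1
  -- the Bellman backup value T
  have hTdef : bellmanOp M pol h fnext (s, a)
      = M.r h (s, a) + ∫ s', F s' ∂(M.P h (s, a)) := rfl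
  have hTb : |bellmanOp M pol h fnext (s, a)| ≤ 2 * b := by
    rw [hTdef]
    have h1 : |∫ s', F s' ∂(M.P h (s, a))| ≤ b := by
      have h2 := norm_integral_le_of_norm_le_const (μ := M.P h (s, a)) (C := b) (f := F)
        (Filter.Eventually.of_forall (fun s' => by rw [Real.norm_eq_abs]; exact hFb s'))
      simpa [Real.norm_eq_abs] using h2
    calc |M.r h (s, a) + ∫ s', F s' ∂(M.P h (s, a))|
        ≤ |M.r h (s, a)| + |∫ s', F s' ∂(M.P h (s, a))| := abs_add_le _ _
      _ ≤ 2 * b := by linarith [hr h (s, a)]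
  -- the observable y
  set y : ℝ × S → ℝ := fun z => z.1 + F z.2 with hy
  have hymeas : Measurable y := measurable_fst.add (hFmeas.measurable.comp measurable_snd)
  have hyb : ∀ᵐ z ∂ζ, |y z| ≤ 2 * b := by
    filter_upwards [hrb] with z hz
    calc |y z| ≤ |z.1| + |F z.2| := abs_add_le _ _
      _ ≤ 2 * b := by linarith [hFb z.2]
  have hyI : ∫ z, y z ∂ζ = bellmanOp M pol h fnext (s, a) := by
    have hIfst : Integrable (fun z : ℝ × S => z.1) ζ :=
      aux_integrable measurable_fst.aestronglyMeasurable hrb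
    have hIFsnd : Integrable (fun z : ℝ × S => F z.2) ζ :=
      aux_integrable (hFmeas.measurable.comp measurable_snd).aestronglyMeasurable
        (Filter.Eventually.of_forall (fun z => hFb z.2))
    have h1 : ∫ z, y z ∂ζ = (∫ z, z.1 ∂ζ) + ∫ z, F z.2 ∂ζ := by
      simp_rw [hy]
      exact integral_add hIfst hIFsnd
    have h2 : ∫ z, F z.2 ∂ζ = ∫ s', F s' ∂(M.P h (s, a)) := by
      rw [← hmarg, integral_map measurable_snd.aemeasurable hFmeas.aestronglyMeasurable]
    rw [h1, h2, hrmean, hTdef]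
  -- rewrite the excess TD loss
  have hXeq : ∀ z : ℝ × S, excessTD M pol h fh fnext (s, a, z.1, z.2)
      = (fh (s, a) - y z) ^ 2 - (bellmanOp M pol h fnext (s, a) - y z) ^ 2 := by
    intro z
    simp only [excessTD, tdLoss, hy, hF]
    ring
  have hberr : (bellmanErr M pol h fh fnext (s, a)) ^ 2
      = (bellmanOp M pol h fnext (s, a) - fh (s, a)) ^ 2 := rfl
  rw [hberr]
  have hgoal : (∫ z, Real.exp (-2 * γ * excessTD M pol h fh fnext (s, a, z.1, z.2)) ∂ζ)
      = ∫ z, Real.exp (-2 * γ * ((fh (s, a) - y z) ^ 2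
          - (bellmanOp M pol h fnext (s, a) - y z) ^ 2)) ∂ζ := by
    simp_rw [hXeq]
  rw [hgoal]
  exact aux_key ζ y hymeas b (fh (s, a)) (bellmanOp M pol h fnext (s, a)) γ hb hyb hyI
    (abs_le.mpr ⟨(hfhb _).1, (hfhb _).2⟩) hTb hγ0 hγ
end
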